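/- arXiv:1208.5639 — 8 statements merged into one kernel-verified Lean document; each statement's English description precedes it below -/
import Mathlib

section
/- Let k ≥ 1, n ≥ 2k², and define S ⊂ {0,1}ⁿ as the set of vectors x_i (0 ≤ i ≤ k) where x_i has its first i coordinates equal to 1 among the first k coordinates, and coordinates k+1 through k+i² equal to 1, and all other coordinates 0. Let W be the 2×n binary matrix whose first k columns equal (1,0) and whose next k² columns equal (0,1) and remaining columns are zero. Then the image WS equals {(i, i²) : 0 ≤ i ≤ k}, which is a set of k+1 points in strictly convex position, so the convex hull conv(WS) has exactly k+1 vertices. -/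
lemma aux_count (n a b : ℕ) (hb : b ≤ n) :
    (∑ j : Fin n, (if a ≤ (j:ℕ) ∧ (j:ℕ) < b then (1:ℝ) else 0)) = (b - a : ℕ) := by
  rw [Fin.sum_univ_eq_sum_range (fun j => if a ≤ j ∧ j < b then (1:ℝ) else 0)]
  rw [Finset.sum_ite, Finset.sum_const, Finset.sum_const, smul_zero, add_zero, nsmul_eq_mul,
    mul_one]
  have : (Finset.range n).filter (fun i => a ≤ i ∧ i < b) = Finset.Ico a b := by
    ext j; simp [Finset.mem_Ico]; omega
  rw [this, Nat.card_Ico]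

/-- The linear functional `z ↦ 2*c*z 0 - z 1` on `Fin 2 → ℝ`. -/
noncomputable def auxF (c : ℝ) : (Fin 2 → ℝ) →ₗ[ℝ] ℝ :=
  (2 * c) • LinearMap.proj 0 - LinearMap.proj 1

lemma auxF_apply (c : ℝ) (z : Fin 2 → ℝ) : auxF c z = 2 * c * z 0 - z 1 := rfl

set_option maxHeartbeats 1000000 in
/-- Key geometric fact: each point on the parabola is an extreme point of the
convex hull of a set of parabola points. -/
lemma parabola_extreme (k : ℕ) (A : Set (Fin 2 → ℝ))
    (hA : A = {p : Fin 2 → ℝ | ∃ i : ℕ, i ≤ k ∧ p = ![(i : ℝ), (i : ℝ) ^ 2]}) :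
    Set.extremePoints ℝ (convexHull ℝ A) = A := by
  apply subset_antisymm extremePoints_convexHull_subset
  rintro p hp
  rw [hA] at hp
  obtain ⟨i, hi, rfl⟩ := hp
  set q : ℕ → (Fin 2 → ℝ) := fun m => ![(m : ℝ), (m : ℝ) ^ 2] with hq
  have hq0 : ∀ m : ℕ, q m 0 = (m : ℝ) := fun m => rfl
  have hq1 : ∀ m : ℕ, q m 1 = (m : ℝ) ^ 2 := fun m => rfl
  set f := auxF (i : ℝ) with hf
  have hfq : ∀ m : ℕ, f (q m) = (i:ℝ)^2 - ((i:ℝ) - (m:ℝ))^2 := by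
    intro m; rw [auxF_apply, hq0, hq1]; ring
  -- f ≤ i² on the hull, with equality only at q i
  have hle : ∀ z ∈ convexHull ℝ A, f z ≤ (i:ℝ)^2 := by
    intro z hz
    have : convexHull ℝ A ⊆ {z | f z ≤ (i:ℝ)^2} := by
      apply convexHull_min
      · rintro p hp
        rw [hA] at hp
        obtain ⟨m, hm, rfl⟩ := hp
        show f (q m) ≤ (i:ℝ)^2
        rw [hfq]; nlinarith [sq_nonneg ((i:ℝ) - (m:ℝ))]
      · exact convex_halfSpace_le f.isLinear _
    exact this hz
  have hface : ∀ z ∈ convexHull ℝ A, f z = (i:ℝ)^2 → z = q i := by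
    intro z hz hfz
    rw [convexHull_eq] at hz
    obtain ⟨ι, t, w, zf, hw0, hw1, hzA, hzc⟩ := hz
    rw [Finset.centerMass_eq_of_sum_1 _ _ hw1] at hzc
    -- each zf j is a parabola point
    have hzA' : ∀ j : ι, ∃ m : ℕ, m ≤ k ∧ (j ∈ t → zf j = q m) := by
      intro j
      by_cases hj : j ∈ t
      · have := hzA j hj
        rw [hA] at this
        obtain ⟨m, hm, he⟩ := this
        exact ⟨m, hm, fun _ => he⟩
      · exact ⟨0, Nat.zero_le _, fun h => absurd h hj⟩
    choose g hg hgz using hzA'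
    have hfz' : f z = ∑ j ∈ t, w j * ((i:ℝ)^2 - ((i:ℝ) - (g j : ℝ))^2) := by
      rw [← hzc, map_sum]
      refine Finset.sum_congr rfl fun j hj => ?_
      rw [map_smul, smul_eq_mul, hgz j hj, hfq]
    have hsum0 : ∑ j ∈ t, w j * ((i:ℝ) - (g j : ℝ))^2 = 0 := by
      have hexp : ∑ j ∈ t, w j * ((i:ℝ)^2 - ((i:ℝ) - (g j : ℝ))^2)
          = (∑ j ∈ t, w j) * (i:ℝ)^2 - ∑ j ∈ t, w j * ((i:ℝ) - (g j : ℝ))^2 := by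
        rw [Finset.sum_mul]
        rw [← Finset.sum_sub_distrib]
        exact Finset.sum_congr rfl fun j hj => by ring
      rw [hfz', hexp, hw1, one_mul] at hfz
      linarith
    have hzero : ∀ j ∈ t, w j * ((i:ℝ) - (g j : ℝ))^2 = 0 :=
      (Finset.sum_eq_zero_iff_of_nonneg
        (fun j hj => mul_nonneg (hw0 j hj) (sq_nonneg _))).mp hsum0
    have hterm : ∀ j ∈ t, w j • zf j = w j • q i := by
      intro j hj
      rcases mul_eq_zero.mp (hzero j hj) with h | h
      · rw [h, zero_smul, zero_smul]
      · rw [sq_eq_zero_iff] at h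
        have hd : (i:ℝ) - (g j : ℝ) = 0 := h
        have hgi : ((g j : ℕ) : ℝ) = (i : ℝ) := by linarith
        rw [hgz j hj, hq]
        simp only [hgi]
    rw [← hzc, Finset.sum_congr rfl hterm, ← Finset.sum_smul, hw1, one_smul]
  -- now the extreme point property
  rw [mem_extremePoints]
  have hqi : f (q i) = (i:ℝ)^2 := by rw [hfq]; ring
  refine ⟨subset_convexHull ℝ A (by rw [hA]; exact ⟨i, hi, rfl⟩), ?_⟩
  intro u hu v hv hseg
  obtain ⟨a, b, ha, hb, hab, habsum⟩ := hseg
  have hfu := hle u hu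
  have hfv := hle v hv
  have hfp : a * f u + b * f v = (i:ℝ)^2 := by
    have h2 := congrArg f habsum
    rw [map_add, map_smul, map_smul, smul_eq_mul, smul_eq_mul] at h2
    rw [h2]
    exact hqi
  have key : a * ((i:ℝ)^2 - f u) + b * ((i:ℝ)^2 - f v) = 0 := by
    linear_combination (i:ℝ)^2 * hab - hfp
  have h1 : 0 ≤ a * ((i:ℝ)^2 - f u) := mul_nonneg ha.le (by linarith)
  have h2 : 0 ≤ b * ((i:ℝ)^2 - f v) := mul_nonneg hb.le (by linarith)
  have hu0 : a * ((i:ℝ)^2 - f u) = 0 := by linarith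
  have hv0 : b * ((i:ℝ)^2 - f v) = 0 := by linarith
  have hfu' : f u = (i:ℝ)^2 := by
    rcases mul_eq_zero.mp hu0 with h | h
    · exact absurd h (ne_of_gt ha)
    · linarith
  have hfv' : f v = (i:ℝ)^2 := by
    rcases mul_eq_zero.mp hv0 with h | h
    · exact absurd h (ne_of_gt hb)
    · linarith
  exact ⟨hface u hu hfu', hface v hv hfv'⟩

/-- For `k ≥ 1` and `n ≥ 2k²`, with `S = {x_0, …, x_k} ⊆ {0,1}ⁿ` where `x_i` has its
first `i` coordinates (among the first `k`) equal to `1` and coordinates `k+1,…,k+i²`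
equal to `1`, and `W` the binary `2 × n` matrix whose first `k` columns are `(1,0)`,
next `k²` columns are `(0,1)` and remaining columns are zero, the image `WS` equals
`{(i, i²) : 0 ≤ i ≤ k}`, every point of it is a vertex of `conv(WS)`, and
`conv(WS)` has exactly `k + 1` vertices. -/
theorem stmt_0 (k n : ℕ) (hk : 1 ≤ k) (hn : 2 * k ^ 2 ≤ n)
    (x : ℕ → Fin n → ℝ)
    (hx : ∀ i : ℕ, i ≤ k → ∀ j : Fin n,
      x i j = if (j : ℕ) < i ∨ (k ≤ (j : ℕ) ∧ (j : ℕ) < k + i * i) then 1 else 0)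
    (S : Set (Fin n → ℝ)) (hS : S = {y | ∃ i : ℕ, i ≤ k ∧ y = x i})
    (W : Matrix (Fin 2) (Fin n) ℝ)
    (hW0 : ∀ j : Fin n, W 0 j = if (j : ℕ) < k then 1 else 0)
    (hW1 : ∀ j : Fin n, W 1 j = if k ≤ (j : ℕ) ∧ (j : ℕ) < k + k * k then 1 else 0) :
    W.mulVec '' S = {p : Fin 2 → ℝ | ∃ i : ℕ, i ≤ k ∧ p = ![(i : ℝ), (i : ℝ) ^ 2]} ∧
    Set.extremePoints ℝ (convexHull ℝ (W.mulVec '' S)) = W.mulVec '' S ∧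
    (Set.extremePoints ℝ (convexHull ℝ (W.mulVec '' S))).ncard = k + 1 := by
  have hkk : k ≤ k * k := Nat.le_mul_of_pos_left k hk
  have hkn : k + k * k ≤ n := by nlinarith [sq_nonneg k, pow_two k]
  have hmul : ∀ i : ℕ, i ≤ k → W.mulVec (x i) = ![(i : ℝ), (i : ℝ) ^ 2] := by
    intro i hi
    funext r
    fin_cases r
    · show ∑ j : Fin n, W 0 j * x i j = (i : ℝ)
      have h1 : ∀ j : Fin n, W 0 j * x i j = if 0 ≤ (j:ℕ) ∧ (j:ℕ) < i then (1:ℝ) else 0 := by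
        intro j
        rw [hW0, hx i hi]
        split_ifs with h1 h2 h3 <;> simp_all <;> omega
      simp only [h1]
      rw [aux_count n 0 i (by omega)]
      simp
    · show ∑ j : Fin n, W 1 j * x i j = (i : ℝ)^2
      have h1 : ∀ j : Fin n, W 1 j * x i j =
          if k ≤ (j:ℕ) ∧ (j:ℕ) < k + i * i then (1:ℝ) else 0 := by
        intro j
        rw [hW1, hx i hi]
        have hii : i * i ≤ k * k := Nat.mul_le_mul hi hi
        split_ifs with h1 h2 h3 <;> simp_all <;> omega
      simp only [h1]
      rw [aux_count n k (k + i * i) (by nlinarith)]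
      have : k + i * i - k = i * i := by omega
      rw [this]
      push_cast
      ring
  have himg : W.mulVec '' S = {p : Fin 2 → ℝ | ∃ i : ℕ, i ≤ k ∧ p = ![(i : ℝ), (i : ℝ) ^ 2]} := by
    ext p
    constructor
    · rintro ⟨y, hy, rfl⟩
      rw [hS] at hy
      obtain ⟨i, hi, rfl⟩ := hy
      exact ⟨i, hi, hmul i hi⟩
    · rintro ⟨i, hi, rfl⟩
      exact ⟨x i, by rw [hS]; exact ⟨i, hi, rfl⟩, hmul i hi⟩
  have hext := parabola_extreme k _ himg
  rw [himg] at hext ⊢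
  refine ⟨rfl, hext, ?_⟩
  rw [hext]
  have : {p : Fin 2 → ℝ | ∃ i : ℕ, i ≤ k ∧ p = ![(i : ℝ), (i : ℝ) ^ 2]}
      = (fun i : ℕ => ![(i : ℝ), (i : ℝ) ^ 2]) '' (Set.Iic k) := by
    ext p; simp [Set.mem_image, eq_comm]
  rw [this, Set.ncard_image_of_injOn, ← Finset.coe_Iic, Set.ncard_coe_finset, Nat.card_Iic]
  intro a _ b _ hab
  have : ((a:ℝ)) = (b:ℝ) := congrFun hab 0
  exact_mod_cast this
end

section
/- For every n ≥ 2 there exist a set S ⊆ {0,1}ⁿ and a matrix W ∈ {0,1}^{2×n} such that the convex hull of {Wx : x ∈ S} ⊂ ℝ² has more than √(n/2) vertices (extreme points). -/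
open Finset

lemma sum_indicator (n a b : ℕ) (hb : b ≤ n) :
    ∑ j : Fin n, (if a ≤ (j:ℕ) ∧ (j:ℕ) < b then (1:ℝ) else 0) = ((b - a : ℕ) : ℝ) := by
  rw [Fin.sum_univ_eq_sum_range (fun j => if a ≤ j ∧ j < b then (1:ℝ) else 0) n]
  rw [Finset.sum_boole]
  have : (Finset.range n).filter (fun j => a ≤ j ∧ j < b) = Finset.Ico a b := by
    ext j; simp [Finset.mem_Ico]; omega
  rw [this, Nat.card_Ico]

lemma unique_max {E : Type*} [AddCommGroup E] [Module ℝ E] (F : Finset E)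
    (f : E →ₗ[ℝ] ℝ) (x : E) (hx : x ∈ F) (hlt : ∀ y ∈ F, y ≠ x → f y < f x) :
    ∀ p ∈ convexHull ℝ (F : Set E), f x ≤ f p → p = x := by
  intro p hp hfp
  obtain ⟨w, hw0, hw1, hwp⟩ := Finset.mem_convexHull'.1 hp
  have hfps : f p = ∑ y ∈ F, w y * f y := by
    rw [← hwp, map_sum]; simp [smul_eq_mul]
  have hsum : ∑ y ∈ F, w y * f x = f x := by rw [← Finset.sum_mul, hw1, one_mul]
  have hwk : ∀ y ∈ F, y ≠ x → w y * f y ≤ w y * f x := fun y hy hne =>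
    mul_le_mul_of_nonneg_left (le_of_lt (hlt y hy hne)) (hw0 y hy)
  have hle : ∑ y ∈ F, w y * f y ≤ ∑ y ∈ F, w y * f x := by
    apply Finset.sum_le_sum
    intro y hy
    rcases eq_or_ne y x with rfl | hne
    · exact le_refl _
    · exact hwk y hy hne
  have hzero : ∀ y ∈ F, y ≠ x → w y = 0 := by
    intro y hy hne
    by_contra h
    have hpos : 0 < w y := lt_of_le_of_ne (hw0 y hy) (Ne.symm h)
    have hstrict : ∑ z ∈ F, w z * f z < ∑ z ∈ F, w z * f x := by
      apply Finset.sum_lt_sum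
      · intro z hz
        rcases eq_or_ne z x with rfl | hne'
        · exact le_refl _
        · exact hwk z hz hne'
      · exact ⟨y, hy, mul_lt_mul_of_pos_left (hlt y hy hne) hpos⟩
    rw [hsum] at hstrict
    rw [hfps] at hfp
    linarith
  have hwx : w x = 1 := by
    rw [← hw1]
    exact (Finset.sum_eq_single x (fun b hb hbx => hzero b hb hbx)
      (fun h => absurd hx h)).symm
  rw [← hwp]
  rw [Finset.sum_eq_single x (fun b hb hbx => by rw [hzero b hb hbx, zero_smul])
    (fun h => absurd hx h), hwx, one_smul]

lemma mem_extreme_of_unique_max {E : Type*} [AddCommGroup E] [Module ℝ E] (F : Finset E)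
    (f : E →ₗ[ℝ] ℝ) (x : E) (hx : x ∈ F) (hlt : ∀ y ∈ F, y ≠ x → f y < f x) :
    x ∈ Set.extremePoints ℝ (convexHull ℝ (F : Set E)) := by
  rw [mem_extremePoints_iff_forall_segment]
  refine ⟨subset_convexHull ℝ _ hx, ?_⟩
  have key : ∀ p ∈ convexHull ℝ (F : Set E), f p ≤ f x := by
    apply convexHull_min ?_ (convex_halfSpace_le f.isLinear (f x))
    intro y hy
    simp only [Set.mem_setOf_eq]
    rcases eq_or_ne y x with rfl | hne
    · exact le_refl _
    · exact le_of_lt (hlt y hy hne)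
  intro x₁ h₁ x₂ h₂ hseg
  obtain ⟨a, b, ha, hb, hab, hx'⟩ := hseg
  have hfx : a * f x₁ + b * f x₂ = f x := by
    rw [← hx']; simp [smul_eq_mul]
  rcases eq_or_lt_of_le ha with rfl | hapos
  · right
    simp only [zero_add, zero_smul] at hx' hab
    rw [hab, one_smul] at hx'
    exact hx'
  · left
    have h1 : f x₁ ≤ f x := key x₁ h₁
    have h2 : f x₂ ≤ f x := key x₂ h₂
    have : f x ≤ f x₁ := by
      by_contra hc
      push_neg at hc
      have h3 : a * f x + b * f x = f x := by rw [← add_mul, hab, one_mul]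
      linarith [mul_lt_mul_of_pos_left hc hapos, mul_le_mul_of_nonneg_left h2 hb]
    exact unique_max F f x hx hlt x₁ h₁ this

open Finset

/-- the point `(i, i²) ∈ ℝ²` -/
def vPt (i : ℕ) : Fin 2 → ℝ := ![(i:ℝ), (i:ℝ)^2]

@[simp] lemma vPt_zero (i : ℕ) : vPt i 0 = (i:ℝ) := rfl
@[simp] lemma vPt_one (i : ℕ) : vPt i 1 = (i:ℝ)^2 := rfl

lemma vPt_injective : Function.Injective vPt := by
  intro i j h
  have := congrFun h 0
  simpa [vPt] using this

lemma term0 (t i jv p : ℕ) (hit : i ≤ t) :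
    (if jv < t then (1:ℝ) else 0) * (if (jv < i ∨ (t ≤ jv ∧ jv < t + p)) then 1 else 0)
      = if 0 ≤ jv ∧ jv < i then 1 else 0 := by
  split_ifs <;> (try ring) <;> exfalso <;> omega

lemma term1 (t i jv p q : ℕ) (hit : i ≤ t) (hpq : p ≤ q) :
    (if t ≤ jv ∧ jv < t + q then (1:ℝ) else 0) *
        (if (jv < i ∨ (t ≤ jv ∧ jv < t + p)) then 1 else 0)
      = if t ≤ jv ∧ jv < t + p then 1 else 0 := by
  split_ifs <;> (try ring) <;> exfalso <;> omega


/-- For every `n ≥ 2` there exist `S ⊆ {0,1}ⁿ` and a binary `2 × n` matrix `W`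
such that `conv {Wx : x ∈ S} ⊂ ℝ²` has more than `√(n/2)` vertices. -/
theorem stmt_1 (n : ℕ) (hn : 2 ≤ n) :
    ∃ (S : Set (Fin n → ℝ)) (W : Matrix (Fin 2) (Fin n) ℝ),
      (∀ x ∈ S, ∀ j, x j = 0 ∨ x j = 1) ∧
      (∀ i j, W i j = 0 ∨ W i j = 1) ∧
      Real.sqrt ((n : ℝ) / 2) <
        (Set.extremePoints ℝ (convexHull ℝ (W.mulVec '' S))).ncard := by
  classical
  set t := Nat.sqrt (n / 2) with ht
  have htsq : t * t ≤ n / 2 := by have h := Nat.sqrt_le' (n / 2); rw [pow_two] at h; exact h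
  have htle : t ≤ n / 2 := Nat.sqrt_le_self (n / 2)
  have hsucc : n / 2 < (t + 1) * (t + 1) := by
    have h := Nat.lt_succ_sqrt' (n / 2); rw [pow_two] at h; exact h
  have htn : t + t * t ≤ n := by
    obtain ⟨q, hq⟩ : ∃ q, t * t = q := ⟨_, rfl⟩
    rw [hq] at htsq ⊢; omega
  have hn2 : n < 2 * ((t + 1) * (t + 1)) := by
    obtain ⟨q, hq⟩ : ∃ q, (t + 1) * (t + 1) = q := ⟨_, rfl⟩
    rw [hq] at hsucc ⊢; omega
  -- the binary vectors
  set X : ℕ → (Fin n → ℝ) := fun i j =>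
    if ((j:ℕ) < i ∨ (t ≤ (j:ℕ) ∧ (j:ℕ) < t + i * i)) then 1 else 0 with hX
  set W : Matrix (Fin 2) (Fin n) ℝ := fun k j =>
    if k = 0 then (if (j:ℕ) < t then 1 else 0)
    else (if t ≤ (j:ℕ) ∧ (j:ℕ) < t + t * t then 1 else 0) with hW
  refine ⟨X '' Set.Iio (t + 1), W, ?_, ?_, ?_⟩
  · rintro x ⟨i, _, rfl⟩ j
    by_cases h : ((j:ℕ) < i ∨ (t ≤ (j:ℕ) ∧ (j:ℕ) < t + i * i)) <;> simp [hX, h]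
  · intro k j
    rcases eq_or_ne k 0 with rfl | hk <;> by_cases h : (j:ℕ) < t <;>
      by_cases h2 : t ≤ (j:ℕ) ∧ (j:ℕ) < t + t * t <;> (simp only [hW]; split_ifs <;> simp)
  · -- compute the image
    have hWX : ∀ i ∈ Set.Iio (t + 1), W.mulVec (X i) = vPt i := by
      intro i hi
      have hit : i ≤ t := Nat.lt_succ_iff.1 hi
      have hi2 : i * i ≤ t * t := Nat.mul_le_mul hit hit
      funext k
      fin_cases k
      · have hterm : ∀ j : Fin n, W 0 j * X i j =
            if 0 ≤ (j:ℕ) ∧ (j:ℕ) < i then (1:ℝ) else 0 := by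
          intro j
          simp only [hW, hX, if_pos rfl]
          exact term0 t i (j:ℕ) (i * i) hit
        show (W.mulVec (X i)) 0 = vPt i 0
        simp only [Matrix.mulVec, dotProduct]
        rw [Finset.sum_congr rfl (fun j _ => hterm j),
          sum_indicator n 0 i (by
            obtain ⟨q, hq⟩ : ∃ q, t * t = q := ⟨_, rfl⟩
            rw [hq] at htn; omega)]
        simp
      · have hterm : ∀ j : Fin n, W 1 j * X i j =
            if t ≤ (j:ℕ) ∧ (j:ℕ) < t + i * i then (1:ℝ) else 0 := by
          intro j
          have h10 : (1 : Fin 2) ≠ 0 := by decide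
          simp only [hW, hX, if_neg h10]
          exact term1 t i (j:ℕ) (i * i) (t * t) hit hi2
        show (W.mulVec (X i)) 1 = vPt i 1
        simp only [Matrix.mulVec, dotProduct]
        rw [Finset.sum_congr rfl (fun j _ => hterm j),
          sum_indicator n t (t + i * i) (by
            obtain ⟨p, hp⟩ : ∃ p, i * i = p := ⟨_, rfl⟩
            obtain ⟨q, hq⟩ : ∃ q, t * t = q := ⟨_, rfl⟩
            rw [hp] at hi2 ⊢; rw [hq] at hi2 htn; omega)]
        have : t + i * i - t = i * i := by omega
        rw [this]
        push_cast
        simp [pow_two]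
    set G : Finset (Fin 2 → ℝ) := (Finset.range (t + 1)).image vPt with hG
    have himg : W.mulVec '' (X '' Set.Iio (t + 1)) = (G : Set (Fin 2 → ℝ)) := by
      rw [Set.image_image, hG, Finset.coe_image, Finset.coe_range]
      exact Set.image_congr hWX
    rw [himg]
    -- each vPt i is an extreme point
    have hext : ∀ i < t + 1, vPt i ∈ Set.extremePoints ℝ (convexHull ℝ (G : Set (Fin 2 → ℝ))) := by
      intro i hi
      apply mem_extreme_of_unique_max G
        ((2 * (i:ℝ)) • LinearMap.proj 0 - LinearMap.proj 1) (vPt i)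
        (Finset.mem_image_of_mem vPt (Finset.mem_range.2 hi))
      intro y hy hne
      obtain ⟨j, hj, rfl⟩ := Finset.mem_image.1 hy
      have hji : j ≠ i := fun h => hne (by rw [h])
      have hji' : (j:ℝ) ≠ (i:ℝ) := by exact_mod_cast hji
      simp only [LinearMap.sub_apply, LinearMap.smul_apply, LinearMap.proj_apply,
        smul_eq_mul, vPt_zero, vPt_one]
      have hne0 : (i:ℝ) - j ≠ 0 := sub_ne_zero.2 (Ne.symm hji')
      have hpos : (0:ℝ) < ((i:ℝ) - j)^2 :=
        lt_of_le_of_ne (sq_nonneg _) (Ne.symm (pow_ne_zero 2 hne0))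
      nlinarith [hpos]
    have hsub : (G : Set (Fin 2 → ℝ)) ⊆
        Set.extremePoints ℝ (convexHull ℝ (G : Set (Fin 2 → ℝ))) := by
      intro p hp
      obtain ⟨i, hi, rfl⟩ := Finset.mem_image.1 hp
      exact hext i (Finset.mem_range.1 hi)
    have hfin : (Set.extremePoints ℝ (convexHull ℝ (G : Set (Fin 2 → ℝ)))).Finite :=
      Set.Finite.subset G.finite_toSet extremePoints_convexHull_subset
    have hcard : G.card = t + 1 := by
      rw [hG, Finset.card_image_of_injective _ vPt_injective, Finset.card_range]
    have hle : t + 1 ≤ (Set.extremePoints ℝ (convexHull ℝ (G : Set (Fin 2 → ℝ)))).ncard := by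
      calc t + 1 = (G : Set (Fin 2 → ℝ)).ncard := by rw [Set.ncard_coe_finset, hcard]
        _ ≤ _ := Set.ncard_le_ncard hsub hfin
    have hsq : Real.sqrt ((n:ℝ) / 2) < ((t + 1 : ℕ) : ℝ) := by
      rw [Real.sqrt_lt' (by positivity)]
      have h2 : (n : ℝ) < 2 * (((t + 1) * (t + 1) : ℕ) : ℝ) := by exact_mod_cast hn2
      push_cast at h2 ⊢
      nlinarith [h2]
    calc Real.sqrt ((n:ℝ) / 2) < ((t + 1 : ℕ) : ℝ) := hsq
      _ ≤ _ := by exact_mod_cast hle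
end

section
/- Let S ⊂ ℤⁿ be a finite set, let W be a d×n integer matrix, and suppose every edge of the polytope conv(S) is parallel to some integer vector v with ‖v‖₁ ≤ e. Then every edge of the polytope conv(WS) = {Wx : x ∈ conv(S)} is parallel to some vector in the set {-q, …, -1, 0, 1, …, q}^d, where q = e·‖W‖_∞ and ‖W‖_∞ = max_{i,j} |W_{i,j}|. -/
/-- The segment `[u,v]` (with `u ≠ v`) is an edge of the convex set `P`,
i.e. a 1-dimensional face (extreme set). -/
def IsEdgeOf {n : ℕ} (P : Set (Fin n → ℝ)) (u v : Fin n → ℝ) : Prop :=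
  u ≠ v ∧ IsExtreme ℝ P (segment ℝ u v)

/-- `u - v` is parallel to the integer vector `w`. -/
def ParallelToInt {n : ℕ} (u v : Fin n → ℝ) (w : Fin n → ℤ) : Prop :=
  ∃ c : ℝ, c ≠ 0 ∧ u - v = c • fun j => (w j : ℝ)


open Finset Set

variable {N : ℕ}

/-- absorb lemma: positive-weight generators of a point of an extreme set lie in the set. -/
lemma absorb {A B : Set (Fin N → ℝ)} (hA : Convex ℝ A) (hAB : IsExtreme ℝ A B) :
    ∀ (t : Finset (Fin N → ℝ)), ↑t ⊆ A → ∀ w : (Fin N → ℝ) → ℝ,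
      (∀ i ∈ t, 0 < w i) → t.centerMass w id ∈ B → ↑t ⊆ B := by
  intro t
  induction t using Finset.induction_on with
  | empty => intro _ _ _ _; simp
  | insert a t₀ hnotmem ih =>
    intro hsub w hpos hmem
    rcases t₀.eq_empty_or_nonempty with rfl | hne
    · have hw : w a ≠ 0 := ne_of_gt (hpos a (by simp))
      have heq : (insert a (∅ : Finset (Fin N → ℝ))).centerMass w id = a := by
        rw [Finset.centerMass]
        simp [inv_mul_cancel₀ hw, smul_smul]
      rw [heq] at hmem
      intro x hx
      simp only [Finset.coe_insert, Finset.coe_empty] at hx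
      rcases hx with rfl | hx
      · exact hmem
      · simp at hx
    · have hsumpos : 0 < ∑ j ∈ t₀, w j :=
        Finset.sum_pos (fun i hi => hpos i (Finset.mem_insert_of_mem hi)) hne
      have hsumne : ∑ j ∈ t₀, w j ≠ 0 := ne_of_gt hsumpos
      have hwa : 0 < w a := hpos a (Finset.mem_insert_self _ _)
      set y := t₀.centerMass w id with hy
      have hyA : y ∈ A := by
        have : y ∈ convexHull ℝ (↑t₀ : Set (Fin N → ℝ)) :=
          Finset.centerMass_mem_convexHull _ (fun i hi => (hpos i (Finset.mem_insert_of_mem hi)).le)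
            hsumpos (fun i hi => Finset.mem_coe.2 hi)
        exact convexHull_min (fun x hx => hsub (Finset.mem_coe.2 (Finset.mem_insert_of_mem hx))) hA this
      have haA : a ∈ A := hsub (Finset.mem_coe.2 (Finset.mem_insert_self _ _))
      have hx : (insert a t₀).centerMass w id ∈ openSegment ℝ a y := by
        refine ⟨w a / (w a + ∑ j ∈ t₀, w j), (∑ j ∈ t₀, w j) / (w a + ∑ j ∈ t₀, w j),
          by positivity, by positivity, by field_simp, ?_⟩
        have hins := Finset.centerMass_insert a t₀ (w := w) id hnotmem hsumne
        rw [hy]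
        convert hins.symm using 2 <;> congr!
      have hres := And.intro (hAB.2 haA hyA hmem hx) (hAB.right_mem_of_mem_openSegment haA hyA hmem hx)
      have ht₀B : (↑t₀ : Set (Fin N → ℝ)) ⊆ B :=
        ih (fun x hx => hsub (Finset.mem_coe.2 (Finset.mem_insert_of_mem (Finset.mem_coe.1 hx))))
          w (fun i hi => hpos i (Finset.mem_insert_of_mem hi)) hres.2
      intro x hx
      rcases Finset.mem_insert.1 (Finset.mem_coe.1 hx) with rfl | hx'
      · exact hres.1
      · exact ht₀B (Finset.mem_coe.2 hx')

lemma preimage_extreme {n d : ℕ} (f : (Fin n → ℝ) →ₗ[ℝ] (Fin d → ℝ)) (A : Set (Fin n → ℝ))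
    (F₀ : Set (Fin d → ℝ)) (h : IsExtreme ℝ (convexHull ℝ (⇑f '' A)) F₀) :
    IsExtreme ℝ (convexHull ℝ A) (convexHull ℝ A ∩ ⇑f ⁻¹' F₀) := by
  constructor
  · exact Set.inter_subset_left
  · rintro x₁ hx₁ x₂ hx₂ x ⟨hxA, hxF⟩ hxopen
    have himg : ∀ y ∈ convexHull ℝ A, f y ∈ convexHull ℝ (⇑f '' A) := by
      intro y hy
      rw [← f.image_convexHull]
      exact Set.mem_image_of_mem _ hy
    have hfx : f x ∈ openSegment ℝ (f x₁) (f x₂) := by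
      have himgseg := image_openSegment ℝ f.toAffineMap x₁ x₂
      simp only [LinearMap.coe_toAffineMap] at himgseg
      rw [← himgseg]
      exact Set.mem_image_of_mem _ hxopen
    have hres := h.2 (himg _ hx₁) (himg _ hx₂) hxF hfx
    exact Set.mem_inter hx₁ hres

lemma endpoint_extreme {d : ℕ} {u v : Fin d → ℝ} (huv : u ≠ v) :
    IsExtreme ℝ (segment ℝ u v) {u} := by
  constructor
  · intro x hx
    rw [Set.mem_singleton_iff] at hx
    rw [hx]
    exact left_mem_segment ℝ u v
  · intro x₁ hx₁ x₂ hx₂ x hx hxopen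
    rw [Set.mem_singleton_iff] at hx
    rw [hx] at hxopen
    clear hx
    obtain ⟨a₁, b₁, ha₁, hb₁, hab₁, rfl⟩ := hx₁
    obtain ⟨a₂, b₂, ha₂, hb₂, hab₂, rfl⟩ := hx₂
    obtain ⟨θ₁, θ₂, hθ₁, hθ₂, hθ, heq⟩ := hxopen
    set s := θ₁ * b₁ + θ₂ * b₂ with hs
    have hexp : θ₁ • (a₁ • u + b₁ • v) + θ₂ • (a₂ • u + b₂ • v)
        = (θ₁ * a₁ + θ₂ * a₂) • u + s • v := by
      simp only [hs, smul_add, smul_smul, add_smul]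
      abel
    have hcoef : θ₁ * a₁ + θ₂ * a₂ = 1 - s := by
      have : a₁ = 1 - b₁ := by linarith
      have : a₂ = 1 - b₂ := by linarith
      simp only [hs]; nlinarith
    have hkey : s • (v - u) = 0 := by
      rw [hexp, hcoef] at heq
      have : (1 - s) • u + s • v - u = s • (v - u) := by
        simp only [sub_smul, smul_sub, one_smul]; abel
      rw [← this, heq]; abel
    have hs0 : s = 0 := by
      rcases smul_eq_zero.1 hkey with h | h
      · exact h
      · exact absurd (by rwa [sub_eq_zero] at h) (Ne.symm huv)
    have hb₁0 : b₁ = 0 := by nlinarith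
    have hb₂0 : b₂ = 0 := by nlinarith
    have ha₁1 : a₁ = 1 := by linarith
    have ha₂1 : a₂ = 1 := by linarith
    subst hb₁0 hb₂0 ha₁1 ha₂1
    simp

lemma endpoint_extreme' {d : ℕ} {u v : Fin d → ℝ} (huv : u ≠ v) :
    IsExtreme ℝ (segment ℝ u v) {v} := by
  rw [segment_symm]
  exact endpoint_extreme (Ne.symm huv)

lemma argmax_face_extreme {N : ℕ} (t : Finset (Fin N → ℝ)) (ℓ : (Fin N → ℝ) →ₗ[ℝ] ℝ)
    (astar : Fin N → ℝ) (hastar : astar ∈ t) (hmax : ∀ x ∈ t, ℓ x ≤ ℓ astar) :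
    IsExtreme ℝ (convexHull ℝ (↑t : Set (Fin N → ℝ)))
      (convexHull ℝ (↑(t.filter (fun x => ℓ x = ℓ astar)) : Set (Fin N → ℝ))) := by
  classical
  have hle : ∀ y ∈ convexHull ℝ (↑t : Set (Fin N → ℝ)), ℓ y ≤ ℓ astar := by
    intro y hy
    have h1 : ℓ y ∈ ⇑ℓ '' convexHull ℝ (↑t : Set (Fin N → ℝ)) := Set.mem_image_of_mem _ hy
    rw [ℓ.image_convexHull] at h1
    have h2 : convexHull ℝ (⇑ℓ '' (↑t : Set (Fin N → ℝ))) ⊆ Set.Iic (ℓ astar) :=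
      convexHull_min (by rintro _ ⟨i, hi, rfl⟩; exact hmax i hi) (convex_Iic _)
    exact h2 h1
  have heqM : ∀ x ∈ convexHull ℝ (↑(t.filter (fun x => ℓ x = ℓ astar)) : Set (Fin N → ℝ)),
      ℓ x = ℓ astar := by
    intro x hx
    have h1 : ℓ x ∈ ⇑ℓ '' convexHull ℝ (↑(t.filter (fun x => ℓ x = ℓ astar)) : Set (Fin N → ℝ)) :=
      Set.mem_image_of_mem _ hx
    rw [ℓ.image_convexHull] at h1
    have h2 : convexHull ℝ (⇑ℓ '' (↑(t.filter (fun x => ℓ x = ℓ astar)) : Set (Fin N → ℝ)))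
        ⊆ ({ℓ astar} : Set ℝ) :=
      convexHull_min (by rintro _ ⟨i, hi, rfl⟩; exact (Finset.mem_filter.1 hi).2)
        (convex_singleton _)
    exact h2 h1
  have hset : convexHull ℝ (↑(t.filter (fun x => ℓ x = ℓ astar)) : Set (Fin N → ℝ))
      = {x ∈ convexHull ℝ (↑t : Set (Fin N → ℝ)) |
          ∀ y ∈ convexHull ℝ (↑t : Set (Fin N → ℝ)), ℓ y ≤ ℓ x} := by
    apply Set.Subset.antisymm
    · intro x hx
      refine ⟨convexHull_mono (by exact_mod_cast Finset.filter_subset _ t) hx, ?_⟩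
      intro y hy
      rw [heqM x hx]
      exact hle y hy
    · rintro x ⟨hxt, hopt⟩
      have hxM : ℓ x = ℓ astar :=
        le_antisymm (hle x hxt) (hopt astar (subset_convexHull ℝ _ (Finset.mem_coe.2 hastar)))
      rw [Finset.convexHull_eq] at hxt
      obtain ⟨w, hw0, hw1, hcm⟩ := hxt
      have hlx : ℓ x = ∑ y ∈ t, w y * ℓ y := by
        rw [← hcm, Finset.centerMass_eq_of_sum_1 _ id hw1]
        simp [map_sum, map_smul]
      have hsupp : ∀ y ∈ t, w y ≠ 0 → ℓ y = ℓ astar := by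
        intro y hyt hwy
        by_contra hne
        have hterm : ∀ i ∈ t, 0 ≤ w i * (ℓ astar - ℓ i) := fun i hi =>
          mul_nonneg (hw0 i hi) (by linarith [hmax i hi])
        have hsum : ∑ i ∈ t, w i * (ℓ astar - ℓ i) = ℓ astar - ℓ x := by
          simp only [mul_sub]
          rw [Finset.sum_sub_distrib, ← Finset.sum_mul, hw1, hlx]
          ring
        have hpos : 0 < w y * (ℓ astar - ℓ y) :=
          mul_pos (lt_of_le_of_ne (hw0 y hyt) (Ne.symm hwy))
            (by cases lt_or_eq_of_le (hmax y hyt) with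
                | inl h => linarith
                | inr h => exact absurd h hne)
        have hone : w y * (ℓ astar - ℓ y) ≤ ∑ i ∈ t, w i * (ℓ astar - ℓ i) :=
          Finset.single_le_sum hterm hyt
        rw [hsum, hxM] at hone
        linarith
      have hcm2 : (t.filter (fun y => w y ≠ 0)).centerMass w id = t.centerMass w id :=
        Finset.centerMass_filter_ne_zero _
      have hsum'' : ∑ y ∈ t.filter (fun y => w y ≠ 0), w y = 1 := by
        rw [Finset.sum_filter_ne_zero, hw1]
      have hmem := Finset.centerMass_mem_convexHull (t.filter (fun y => w y ≠ 0))
        (w := w) (z := id)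
        (fun i hi => hw0 i (Finset.mem_filter.1 hi).1)
        (by rw [hsum'']; exact one_pos)
        (fun i hi => by
          have hi' := Finset.mem_filter.1 hi
          show id i ∈ (↑(t.filter (fun x => ℓ x = ℓ astar)) : Set (Fin N → ℝ))
          simp only [id_eq]
          exact Finset.mem_coe.2 (Finset.mem_filter.2 ⟨hi'.1, hsupp i hi'.1 hi'.2⟩))
      rw [hcm2, hcm] at hmem
      exact hmem
  have hexp : IsExposed ℝ (convexHull ℝ (↑t : Set (Fin N → ℝ)))
      (convexHull ℝ (↑(t.filter (fun x => ℓ x = ℓ astar)) : Set (Fin N → ℝ))) := by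
    intro _
    refine ⟨LinearMap.toContinuousLinearMap ℓ, ?_⟩
    rw [hset]
    simp only [LinearMap.coe_toContinuousLinearMap']
  exact hexp.isExtreme

lemma exists_good_edge {N : ℕ} : ∀ (m : ℕ) (t : Finset (Fin N → ℝ)) (φ : (Fin N → ℝ) →ₗ[ℝ] ℝ),
    t.card ≤ m → (∃ a ∈ t, ∃ b ∈ t, φ a ≠ φ b) →
    ∃ a b : Fin N → ℝ,
      IsExtreme ℝ (convexHull ℝ (↑t : Set (Fin N → ℝ))) (segment ℝ a b) ∧ φ a ≠ φ b := by
  intro m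
  induction m with
  | zero =>
    intro t φ hcard hne
    obtain ⟨a, ha, _⟩ := hne
    rw [Nat.le_zero, Finset.card_eq_zero] at hcard
    subst hcard
    simp at ha
  | succ m ih =>
    intro t φ hcard hne
    classical
    obtain ⟨a0, ha0, b0, hb0, hab0⟩ := hne
    by_cases hcol : ∃ p dirv : Fin N → ℝ, ∀ x ∈ t, ∃ r : ℝ, x = r • dirv + p
    · obtain ⟨p, dirv, hall⟩ := hcol
      choose! r hr using hall
      obtain ⟨b, hb, hbmax⟩ := t.exists_max_image r ⟨a0, ha0⟩
      obtain ⟨a, ha, hamin⟩ := t.exists_min_image r ⟨a0, ha0⟩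
      have hable : r a ≤ r b := hbmax a ha
      rcases eq_or_lt_of_le hable with hEq | hLt
      · exfalso
        apply hab0
        have hconst : ∀ x ∈ t, x = r a • dirv + p := by
          intro x hx
          have h1 : r a ≤ r x := hamin x hx
          have h2 : r x ≤ r b := hbmax x hx
          have : r x = r a := by rw [← hEq] at h2; linarith
          rw [← this]; exact hr x hx
        rw [hconst a0 ha0, hconst b0 hb0]
      · have hd : 0 < r b - r a := by linarith
        have hsub : (↑t : Set (Fin N → ℝ)) ⊆ segment ℝ a b := by
          intro x hx
          rw [Finset.mem_coe] at hx
          set θ := (r b - r x) / (r b - r a) with hθ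
          have h1 : r a ≤ r x := hamin x hx
          have h2 : r x ≤ r b := hbmax x hx
          have hθ0 : 0 ≤ θ := by apply div_nonneg <;> linarith
          have hθ1 : θ ≤ 1 := by rw [div_le_one hd]; linarith
          refine ⟨θ, 1 - θ, hθ0, by linarith, by ring, ?_⟩
          rw [hr a ha, hr b hb, hr x hx]
          have hexp : θ • (r a • dirv + p) + (1 - θ) • (r b • dirv + p)
              = (θ * r a + (1 - θ) * r b) • dirv + (θ + (1 - θ)) • p := by
            simp only [smul_add, smul_smul, add_smul]
            abel
          have hcoef : θ * r a + (1 - θ) * r b = r x := by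
            have hne : r b - r a ≠ 0 := hd.ne'
            rw [hθ, div_mul_eq_mul_div, one_sub_div hne, div_mul_eq_mul_div, ← add_div, div_eq_iff hne]
            ring
          rw [hexp, hcoef]
          norm_num
        have hseg : convexHull ℝ (↑t : Set (Fin N → ℝ)) = segment ℝ a b := by
          apply Set.Subset.antisymm
          · exact convexHull_min hsub (convex_segment a b)
          · rw [← convexHull_pair]
            exact convexHull_mono (by
              intro x hx
              rcases hx with rfl | hx
              · exact Finset.mem_coe.2 ha
              · rw [Set.mem_singleton_iff] at hx; subst hx; exact Finset.mem_coe.2 hb)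
        have hφab : φ a ≠ φ b := by
          intro hcon
          apply hab0
          have hconst : ∀ x ∈ t, φ x = φ a := by
            intro x hx
            obtain ⟨c1, c2, hc1, hc2, hc12, hx'⟩ := hsub (Finset.mem_coe.2 hx)
            have : φ (c1 • a + c2 • b) = c1 * φ a + c2 * φ b := by
              simp [map_add, map_smul, smul_eq_mul]
            rw [hx'] at this
            rw [this, ← hcon]
            linear_combination (φ a) * hc12
          rw [hconst a0 ha0, hconst b0 hb0]
        refine ⟨a, b, ?_, hφab⟩
        rw [hseg]
    · push_neg at hcol
      have hψex : ∃ ψ : (Fin N → ℝ) →ₗ[ℝ] ℝ, ¬ ∃ α β : ℝ, ∀ x ∈ t, ψ x = α * φ x + β := by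
        by_contra hcon
        push_neg at hcon
        choose α β hαβ using fun j => hcon (LinearMap.proj j)
        obtain ⟨x, hx, hno⟩ := hcol (fun j => β j) (fun j => α j)
        apply hno (φ x)
        funext j
        have := hαβ j x hx
        simp only [LinearMap.proj_apply] at this
        simp only [Pi.add_apply, Pi.smul_apply, smul_eq_mul]
        linarith
      obtain ⟨ψ, hψ⟩ := hψex
      obtain ⟨aM, haM, hMmax⟩ := t.exists_max_image (fun x => φ x) ⟨a0, ha0⟩
      set M := φ aM with hM
      set A := t.filter (fun x => φ x = M) with hA
      have hAne : A.Nonempty := ⟨aM, Finset.mem_filter.2 ⟨haM, rfl⟩⟩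
      obtain ⟨astar, hastarA, hψmax⟩ := A.exists_max_image (fun x => ψ x) hAne
      have hastar_t : astar ∈ t := (Finset.mem_filter.1 hastarA).1
      have hastar_M : φ astar = M := (Finset.mem_filter.1 hastarA).2
      set Y := ψ astar with hY
      set B := t.filter (fun x => φ x < M) with hB
      have hBne : B.Nonempty := by
        by_contra hempty
        rw [Finset.not_nonempty_iff_eq_empty] at hempty
        apply hab0
        have hnot : ∀ x ∈ t, φ x = M := by
          intro x hx
          rcases eq_or_lt_of_le (hMmax x hx) with h | h
          · exact h
          · exact absurd (Finset.mem_filter.2 ⟨hx, h⟩) (by rw [← hB, hempty]; simp)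
        rw [hnot a0 ha0, hnot b0 hb0]
      obtain ⟨tstar, htstarB, hgmax⟩ := B.exists_max_image (fun x => (ψ x - Y) / (M - φ x)) hBne
      set c := (ψ tstar - Y) / (M - φ tstar) with hc
      set ℓ : (Fin N → ℝ) →ₗ[ℝ] ℝ := ψ + c • φ with hℓ
      have htstar_t : tstar ∈ t := (Finset.mem_filter.1 htstarB).1
      have htstar_lt : φ tstar < M := (Finset.mem_filter.1 htstarB).2
      have hℓdef : ∀ y, ℓ y = ψ y + c * φ y := fun y => by
        rw [hℓ]; simp [smul_eq_mul]
      have hub : ∀ x ∈ t, ℓ x ≤ ℓ astar := by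
        intro x hx
        rw [hℓdef, hℓdef, hastar_M]
        rcases eq_or_lt_of_le (hMmax x hx) with hEq | hLt
        · have hxA : x ∈ A := Finset.mem_filter.2 ⟨hx, hEq⟩
          have hψx := hψmax x hxA
          rw [hEq]
          rw [← hY]
          linarith
        · have hxB : x ∈ B := Finset.mem_filter.2 ⟨hx, hLt⟩
          have hs := hgmax x hxB
          have hpos : 0 < M - φ x := by linarith
          rw [div_le_iff₀ hpos] at hs
          rw [← hY]
          nlinarith
      have hℓtstar : ℓ tstar = ℓ astar := by
        have hpos : 0 < M - φ tstar := by linarith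
        have hkey : ψ tstar - Y = c * (M - φ tstar) := by
          rw [hc]
          field_simp
        rw [hℓdef, hℓdef, hastar_M, ← hY]
        linarith
      have hext' := argmax_face_extreme t ℓ astar hastar_t hub
      have hproper : ∃ x ∈ t, ¬ (ℓ x = ℓ astar) := by
        by_contra hcon2
        push_neg at hcon2
        apply hψ
        refine ⟨-c, ℓ astar, fun x hx => ?_⟩
        have h1 := hcon2 x hx
        have h2 := hℓdef x
        linarith [h1, h2]
      have hssub : t.filter (fun x => ℓ x = ℓ astar) ⊂ t := by
        rw [Finset.filter_ssubset]
        exact hproper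
      have hcard' : (t.filter (fun x => ℓ x = ℓ astar)).card ≤ m := by
        have := Finset.card_lt_card hssub
        omega
      have hne' : ∃ a ∈ t.filter (fun x => ℓ x = ℓ astar),
          ∃ b ∈ t.filter (fun x => ℓ x = ℓ astar), φ a ≠ φ b := by
        refine ⟨astar, Finset.mem_filter.2 ⟨hastar_t, rfl⟩,
                tstar, Finset.mem_filter.2 ⟨htstar_t, hℓtstar⟩, ?_⟩
        rw [hastar_M]
        exact fun hcon => absurd (hcon ▸ htstar_lt) (by rw [← hcon] at htstar_lt; linarith)
      obtain ⟨a, b, hextseg, hφab⟩ := ih (t.filter (fun x => ℓ x = ℓ astar)) φ hcard' hne'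
      exact ⟨a, b, hext'.trans hextseg, hφab⟩

/-- If every edge of `conv(S)` is parallel to an integer vector of 1-norm at most `e`,
then every edge of the projection `conv(WS)` is parallel to some vector in
`{-q,…,q}^d` where `q = e·‖W‖_∞`. -/
theorem stmt_3 (n d e : ℕ) (S : Set (Fin n → ℤ)) (hSfin : S.Finite)
    (W : Matrix (Fin d) (Fin n) ℤ)
    (Sr : Set (Fin n → ℝ)) (hSr : Sr = (fun x : Fin n → ℤ => fun j => (x j : ℝ)) '' S)
    (hedge : ∀ u v : Fin n → ℝ, IsEdgeOf (convexHull ℝ Sr) u v →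
      ∃ w : Fin n → ℤ, (∑ j, (w j).natAbs) ≤ e ∧ ParallelToInt u v w)
    (q : ℕ) (hq : q = e * Finset.univ.sup fun p : Fin d × Fin n => (W p.1 p.2).natAbs) :
    ∀ u v : Fin d → ℝ,
      IsEdgeOf (convexHull ℝ ((W.map (Int.cast : ℤ → ℝ)).mulVec '' Sr)) u v →
      ∃ z : Fin d → ℤ, (∀ i, (z i).natAbs ≤ q) ∧ ParallelToInt u v z := by
  intro u v hedgeuv
  obtain ⟨huv, hext⟩ := hedgeuv
  classical
  set f := (W.map (Int.cast : ℤ → ℝ)).mulVecLin with hf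
  have hfc : (W.map (Int.cast : ℤ → ℝ)).mulVec = ⇑f := by
    funext x; rw [hf, Matrix.mulVecLin_apply]
  rw [hfc] at hext
  have hSrfin : Sr.Finite := by rw [hSr]; exact hSfin.image _
  have humem : u ∈ ⇑f '' Sr := by
    have h1 : IsExtreme ℝ (convexHull ℝ (⇑f '' Sr)) {u} := hext.trans (endpoint_extreme huv)
    exact extremePoints_convexHull_subset (isExtreme_singleton.1 h1)
  have hvmem : v ∈ ⇑f '' Sr := by
    have h1 : IsExtreme ℝ (convexHull ℝ (⇑f '' Sr)) {v} := hext.trans (endpoint_extreme' huv)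
    exact extremePoints_convexHull_subset (isExtreme_singleton.1 h1)
  obtain ⟨xhat, hxhat, hfx⟩ := humem
  obtain ⟨yhat, hyhat, hfy⟩ := hvmem
  obtain ⟨i₀, hi₀⟩ := Function.ne_iff.1 huv
  set φ : (Fin n → ℝ) →ₗ[ℝ] ℝ := (LinearMap.proj i₀).comp f with hφ
  have hGext := preimage_extreme f Sr (segment ℝ u v) hext
  have hTfin : (Sr ∩ ⇑f ⁻¹' (segment ℝ u v)).Finite := hSrfin.inter_of_left _
  set T := hTfin.toFinset with hT
  have hTcoe : (↑T : Set (Fin n → ℝ)) = Sr ∩ ⇑f ⁻¹' (segment ℝ u v) := hTfin.coe_toFinset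
  have hGconv : convexHull ℝ Sr ∩ ⇑f ⁻¹' (segment ℝ u v)
      = convexHull ℝ (↑T : Set (Fin n → ℝ)) := by
    apply Set.Subset.antisymm
    · intro x hx
      set SF := hSrfin.toFinset with hSF
      have hxhull : x ∈ convexHull ℝ (↑SF : Set (Fin n → ℝ)) := by
        rw [hSrfin.coe_toFinset]; exact hx.1
      rw [Finset.convexHull_eq] at hxhull
      obtain ⟨w, hw0, hw1, hcm⟩ := hxhull
      set t'' := SF.filter (fun y => w y ≠ 0) with ht''
      have hcm2 : t''.centerMass w id = SF.centerMass w id :=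
        Finset.centerMass_filter_ne_zero _
      have hsub'' : (↑t'' : Set (Fin n → ℝ)) ⊆ convexHull ℝ Sr := by
        intro y hy
        apply subset_convexHull ℝ Sr
        have := (Finset.mem_filter.1 (Finset.mem_coe.1 hy)).1
        rwa [Set.Finite.mem_toFinset] at this
      have hpos'' : ∀ i ∈ t'', 0 < w i := fun i hi =>
        lt_of_le_of_ne (hw0 i (Finset.mem_filter.1 hi).1)
          (Ne.symm (Finset.mem_filter.1 hi).2)
      have habs := absorb (convex_convexHull ℝ Sr) hGext t'' hsub'' w hpos''
        (by rw [hcm2, hcm]; exact hx)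
      have hsum'' : ∑ y ∈ t'', w y = 1 := by
        rw [ht'', Finset.sum_filter_ne_zero, hw1]
      have hmem := Finset.centerMass_mem_convexHull t'' (w := w) (z := id)
        (fun i hi => (hpos'' i hi).le)
        (by rw [hsum'']; exact one_pos)
        (fun i hi => by
          show id i ∈ (↑T : Set (Fin n → ℝ))
          simp only [id_eq]
          rw [hTcoe]
          have hiG := habs (Finset.mem_coe.2 hi)
          have hiSr : i ∈ Sr := by
            have := (Finset.mem_filter.1 hi).1
            rwa [Set.Finite.mem_toFinset] at this
          exact ⟨hiSr, hiG.2⟩)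
      rw [hcm2, hcm] at hmem
      exact hmem
    · apply convexHull_min
      · rw [hTcoe]
        intro x hx
        exact ⟨subset_convexHull ℝ Sr hx.1, hx.2⟩
      · exact (convex_convexHull ℝ Sr).inter ((convex_segment u v).linear_preimage f)
  have hxT : xhat ∈ T := by
    rw [hT, Set.Finite.mem_toFinset]
    exact ⟨hxhat, by rw [Set.mem_preimage, hfx]; exact left_mem_segment ℝ u v⟩
  have hyT : yhat ∈ T := by
    rw [hT, Set.Finite.mem_toFinset]
    exact ⟨hyhat, by rw [Set.mem_preimage, hfy]; exact right_mem_segment ℝ u v⟩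
  have hφne : φ xhat ≠ φ yhat := by
    rw [hφ]
    simp only [LinearMap.comp_apply, LinearMap.proj_apply]
    rw [hfx, hfy]
    exact hi₀
  obtain ⟨a, b, hextseg, hφab⟩ := exists_good_edge T.card T φ le_rfl
    ⟨xhat, hxT, yhat, hyT, hφne⟩
  have hedgeP : IsExtreme ℝ (convexHull ℝ Sr) (segment ℝ a b) := by
    have h1 : IsExtreme ℝ (convexHull ℝ Sr) (convexHull ℝ (↑T : Set (Fin n → ℝ))) := by
      rw [← hGconv]; exact hGext
    exact h1.trans hextseg
  have hab : a ≠ b := fun h => hφab (by rw [h])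
  obtain ⟨wvec, hwsum, c, hc0, habw⟩ := hedge a b ⟨hab, hedgeP⟩
  have haT : a ∈ convexHull ℝ (↑T : Set (Fin n → ℝ)) := hextseg.1 (left_mem_segment ℝ a b)
  have hbT : b ∈ convexHull ℝ (↑T : Set (Fin n → ℝ)) := hextseg.1 (right_mem_segment ℝ a b)
  have hTpre : convexHull ℝ (↑T : Set (Fin n → ℝ)) ⊆ ⇑f ⁻¹' (segment ℝ u v) := by
    apply convexHull_min
    · rw [hTcoe]; exact fun x hx => hx.2
    · exact (convex_segment u v).linear_preimage f
  have hfaseg : f a ∈ segment ℝ u v := hTpre haT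
  have hfbseg : f b ∈ segment ℝ u v := hTpre hbT
  rw [segment_eq_image'] at hfaseg hfbseg
  obtain ⟨s1, hs1, hfa'⟩ := hfaseg
  obtain ⟨s2, hs2, hfb'⟩ := hfbseg
  have hfne : f a ≠ f b := by
    intro hcon
    apply hφab
    rw [hφ]
    simp only [LinearMap.comp_apply, LinearMap.proj_apply, hcon]
  have hs12 : s1 ≠ s2 := by
    intro h
    apply hfne
    rw [← hfa', ← hfb', h]
  set z : Fin d → ℤ := W.mulVec wvec with hz
  have hfw : f (fun j => (wvec j : ℝ)) = fun i => (z i : ℝ) := by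
    funext i
    rw [hf, Matrix.mulVecLin_apply]
    simp only [Matrix.mulVec, dotProduct, Matrix.map_apply, hz]
    push_cast
    rfl
  have hdir : f a - f b = (s1 - s2) • (v - u) := by
    rw [← hfa', ← hfb']
    simp only [sub_smul]
    abel
  have hdir2 : f a - f b = c • fun i => (z i : ℝ) := by
    rw [← map_sub, habw, map_smul, hfw]
  have hsne : s2 - s1 ≠ 0 := sub_ne_zero.2 (Ne.symm hs12)
  have hkey : u - v = (c / (s2 - s1)) • fun i => (z i : ℝ) := by
    have h1 : (s2 - s1) • (u - v) = c • fun i => (z i : ℝ) := by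
      rw [← hdir2, hdir]
      simp only [sub_smul, smul_sub]
      abel
    calc u - v = (s2 - s1)⁻¹ • ((s2 - s1) • (u - v)) := by
          rw [smul_smul, inv_mul_cancel₀ hsne, one_smul]
      _ = (s2 - s1)⁻¹ • (c • fun i => (z i : ℝ)) := by rw [h1]
      _ = (c / (s2 - s1)) • fun i => (z i : ℝ) := by
          rw [smul_smul, div_eq_mul_inv, mul_comm]
  refine ⟨z, ?_, c / (s2 - s1), div_ne_zero hc0 hsne, hkey⟩
  intro i
  rw [hq]
  set K := Finset.univ.sup (fun p : Fin d × Fin n => (W p.1 p.2).natAbs) with hK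
  have hKb : ∀ i j, (W i j).natAbs ≤ K := fun i j =>
    Finset.le_sup (f := fun p : Fin d × Fin n => (W p.1 p.2).natAbs) (Finset.mem_univ (i, j))
  have hzi : z i = ∑ j, W i j * wvec j := by
    rw [hz]; simp [Matrix.mulVec, dotProduct]
  have habs1 : |z i| ≤ (e * K : ℤ) := by
    rw [hzi]
    calc |∑ j, W i j * wvec j| ≤ ∑ j, |W i j * wvec j| :=
          Finset.abs_sum_le_sum_abs _ _
      _ = ∑ j, |W i j| * |wvec j| := by simp [abs_mul]
      _ ≤ ∑ j, (K : ℤ) * |wvec j| := by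
          apply Finset.sum_le_sum
          intro j _
          apply mul_le_mul_of_nonneg_right _ (abs_nonneg _)
          rw [Int.abs_eq_natAbs]
          exact_mod_cast hKb i j
      _ = (K : ℤ) * ∑ j, |wvec j| := by rw [Finset.mul_sum]
      _ ≤ (K : ℤ) * e := by
          apply mul_le_mul_of_nonneg_left _ (by positivity)
          have habsj : ∑ j, |wvec j| = ∑ j, ((wvec j).natAbs : ℤ) :=
            Finset.sum_congr rfl (fun j _ => Int.abs_eq_natAbs _)
          rw [habsj]
          exact_mod_cast hwsum
      _ = (e * K : ℤ) := by ring
  have : ((z i).natAbs : ℤ) ≤ (e * K : ℤ) := by rwa [← Int.abs_eq_natAbs]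
  exact_mod_cast this
end

section
/- Let S ⊂ {0,1}ⁿ be the set of indicator vectors of bases of a matroid M on ground set {1,…,n}. Then every edge of the matroid base polytope conv(S) is parallel to a vector of the form 𝟙_i − 𝟙_j for some i ≠ j, where 𝟙_i is the i-th standard unit vector of ℝⁿ. Equivalently, if [u,v] is an edge of conv(S) then the bases B_u = supp(u) and B_v = supp(v) satisfy |B_u Δ B_v| = 2. -/
open Set

lemma symm_exchange {α : Type*} {M : Matroid α} {B B' : Set α} (hB : M.IsBase B) (hB' : M.IsBase B')
    (hfin : B'.Finite) {e : α} (he : e ∈ B \ B') :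
    ∃ f ∈ B' \ B, M.IsBase (insert f (B \ {e})) ∧ M.IsBase (insert e (B' \ {f})) := by
  have heE : e ∈ M.E := hB.subset_ground he.1
  have hI : M.Indep (B \ {e}) := hB.indep.subset diff_subset
  have heK : e ∉ M.closure (B \ {e}) := by
    rw [hI.notMem_closure_iff_of_notMem (by simp) heE, insert_diff_singleton,
      insert_eq_of_mem he.1]
    exact hB.indep
  set D : Set α := {x | x ∈ B' ∧ M.Indep (insert e (B' \ {x}))} with hDdef
  have hD : D ⊆ B' := fun x hx => hx.1
  have key1 : ∀ x ∈ B', x ∉ M.closure (B' \ {x}) := by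
    intro x hx
    rw [(hB'.indep.subset diff_subset).notMem_closure_iff_of_notMem (by simp)
      (hB'.subset_ground hx), insert_diff_singleton, insert_eq_of_mem hx]
    exact hB'.indep
  have key2 : ∀ x ∈ B' \ D, e ∈ M.closure (B' \ {x}) := by
    rintro x ⟨hx, hxD⟩
    have heB' : e ∉ B' \ {x} := fun h => he.2 h.1
    rw [(hB'.indep.subset diff_subset).mem_closure_iff_of_notMem heB']
    rw [Matroid.dep_iff]
    refine ⟨fun hind => hxD ⟨hx, hind⟩, insert_subset heE (diff_subset.trans hB'.subset_ground)⟩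
  have claim : ∀ T : Set α, T.Finite → T ⊆ B' \ D → e ∈ M.closure (B' \ T) := by
    intro T hTfin
    refine Set.Finite.induction_on (motive := fun T _ => T ⊆ B' \ D → e ∈ M.closure (B' \ T))
      T hTfin (fun _ => by rw [diff_empty, hB'.closure_eq]; exact heE) ?_
    intro a T ha hTf IH hsub
    have hIH := IH ((subset_insert a T).trans hsub)
    have haBD := hsub (mem_insert a T)
    by_contra hcon
    have hXeq : B' \ insert a T = (B' \ T) \ {a} := by
      rw [diff_diff, union_singleton]
    have haBT : a ∈ B' \ T := ⟨haBD.1, ha⟩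
    have hins : insert a ((B' \ T) \ {a}) = B' \ T := by
      rw [insert_diff_singleton, insert_eq_of_mem haBT]
    rw [hXeq] at hcon
    have hxch := Matroid.closure_exchange (M := M) (e := e) (f := a) (X := (B' \ T) \ {a})
      ⟨by rwa [hins], hcon⟩
    have h1 : a ∈ M.closure (insert e ((B' \ T) \ {a})) := hxch.1
    have h2 : a ∈ M.closure (insert e (B' \ {a})) :=
      M.closure_subset_closure (insert_subset_insert (diff_subset_diff_left diff_subset)) h1
    rw [Matroid.closure_insert_eq_of_mem_closure (key2 a haBD)] at h2
    exact key1 a haBD.1 h2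
  have hDcl : e ∈ M.closure D := by
    have := claim (B' \ D) hfin.sdiff Subset.rfl
    rwa [diff_diff_cancel_left hD] at this
  have hnotsub : ¬ D ⊆ M.closure (B \ {e}) := by
    intro h
    have := M.closure_subset_closure h hDcl
    rw [Matroid.closure_closure] at this
    exact heK this
  obtain ⟨f, hfD, hfK⟩ := not_subset.1 hnotsub
  have hfB' : f ∈ B' := hfD.1
  have hfB : f ∉ B := by
    intro hfB
    have hfe : f ≠ e := fun h => he.2 (h ▸ hfB')
    exact hfK (M.subset_closure _ hI.subset_ground ⟨hfB, hfe⟩)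
  have hind1 : M.Indep (insert f (B \ {e})) := by
    rwa [hI.notMem_closure_iff_of_notMem (fun h => hfB h.1) (hB'.subset_ground hfB')] at hfK
  exact ⟨f, ⟨hfB', hfB⟩, hB.exchange_isBase_of_indep hfB hind1,
    hB'.exchange_isBase_of_indep he.2 hfD.2⟩

lemma left_extreme {n : ℕ} {u v : Fin n → ℝ} (hne : u ≠ v) :
    u ∈ (segment ℝ u v).extremePoints ℝ := by
  refine ⟨left_mem_segment ℝ u v, ?_⟩
  rintro x₁ ⟨a₁, b₁, ha₁, hb₁, hab₁, rfl⟩ x₂ ⟨a₂, b₂, ha₂, hb₂, hab₂, rfl⟩ ⟨t, s, ht, hs, hts, heq⟩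
  obtain ⟨i, hi⟩ := Function.ne_iff.1 hne
  have heqi := congrFun heq i
  simp only [Pi.add_apply, Pi.smul_apply, smul_eq_mul] at heqi
  have hβ : (t * b₁ + s * b₂) * (v i - u i) = 0 := by
    linear_combination heqi - u i * t * hab₁ - u i * s * hab₂ - u i * hts
  have hβ0 : t * b₁ + s * b₂ = 0 := by
    rcases mul_eq_zero.1 hβ with h | h
    · exact h
    · exact absurd (by linarith : u i = v i) hi
  have htb : t * b₁ = 0 := by nlinarith [mul_nonneg ht.le hb₁, mul_nonneg hs.le hb₂]
  have hsb : s * b₂ = 0 := by nlinarith [mul_nonneg ht.le hb₁, mul_nonneg hs.le hb₂]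
  have hb₁0 : b₁ = 0 := by
    rcases mul_eq_zero.1 htb with h | h
    · exact absurd h ht.ne'
    · exact h
  have hb₂0 : b₂ = 0 := by
    rcases mul_eq_zero.1 hsb with h | h
    · exact absurd h hs.ne'
    · exact h
  rw [show a₁ = (1:ℝ) by linarith, hb₁0]; simp

lemma zero_one_segment {n : ℕ} {u v x : Fin n → ℝ} (hne : u ≠ v)
    (hu : ∀ i, u i = 0 ∨ u i = 1) (hv : ∀ i, v i = 0 ∨ v i = 1) (hx : ∀ i, x i = 0 ∨ x i = 1)
    (hseg : x ∈ segment ℝ u v) : x = u ∨ x = v := by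
  obtain ⟨a, b, ha, hb, hab, rfl⟩ := hseg
  obtain ⟨i, hi⟩ := Function.ne_iff.1 hne
  have hxi := hx i
  simp only [Pi.add_apply, Pi.smul_apply, smul_eq_mul] at hxi
  have hL : b = 0 → a • u + b • v = u := by
    intro h; rw [show a = (1:ℝ) by linarith, h]; simp
  have hR : a = 0 → a • u + b • v = v := by
    intro h; rw [show b = (1:ℝ) by linarith, h]; simp
  rcases hu i with h0 | h1 <;> rcases hv i with g0 | g1
  · exact absurd (h0.trans g0.symm) hi
  · rw [h0, g1] at hxi
    rcases hxi with h | h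
    · exact Or.inl (hL (by linarith))
    · exact Or.inr (hR (by linarith))
  · rw [h1, g0] at hxi
    rcases hxi with h | h
    · exact Or.inr (hR (by linarith))
    · exact Or.inl (hL (by linarith))
  · exact absurd (h1.trans g1.symm) hi

lemma ind_zero_one {n : ℕ} (B : Set (Fin n)) (i : Fin n) :
    B.indicator (fun _ => (1:ℝ)) i = 0 ∨ B.indicator (fun _ => (1:ℝ)) i = 1 := by
  by_cases h : i ∈ B <;> simp [Set.indicator_apply, h]

lemma ind_supp {n : ℕ} (B : Set (Fin n)) :
    {i | B.indicator (fun _ => (1:ℝ)) i ≠ 0} = B := by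
  ext i; by_cases h : i ∈ B <;> simp [Set.indicator_apply, h]

lemma ind_inj {n : ℕ} {B B' : Set (Fin n)}
    (h : B.indicator (fun _ => (1:ℝ)) = B'.indicator (fun _ => (1:ℝ))) : B = B' := by
  rw [← ind_supp B, ← ind_supp B', h]

/-- Every edge of a matroid base polytope is parallel to `𝟙_i - 𝟙_j` for some `i ≠ j`;
equivalently, the bases indicated by the two endpoints of an edge have symmetric
difference of size two. -/
theorem stmt_5 (n : ℕ) (M : Matroid (Fin n)) (hE : M.E = Set.univ)
    (S : Set (Fin n → ℝ))
    (hS : S = {x | ∃ B : Set (Fin n), M.IsBase B ∧ x = B.indicator fun _ => (1 : ℝ)}) :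
    ∀ u v : Fin n → ℝ, IsEdgeOf (convexHull ℝ S) u v →
      (∃ (i j : Fin n) (c : ℝ), i ≠ j ∧ c ≠ 0 ∧
        u - v = c • (Pi.single i (1 : ℝ) - Pi.single j (1 : ℝ))) ∧
      u ∈ S ∧ v ∈ S ∧
      (symmDiff {i | u i ≠ 0} {i | v i ≠ 0}).ncard = 2 := by
  rintro u v ⟨hne, hext⟩
  have huS : u ∈ S :=
    extremePoints_convexHull_subset (hext.extremePoints_subset_extremePoints (left_extreme hne))
  have hvS : v ∈ S := by
    have hv : v ∈ (segment ℝ u v).extremePoints ℝ := by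
      rw [segment_symm]; exact left_extreme hne.symm
    exact extremePoints_convexHull_subset (hext.extremePoints_subset_extremePoints hv)
  obtain ⟨B, hB, hu⟩ := hS ▸ huS
  obtain ⟨B', hB', hv⟩ := hS ▸ hvS
  subst hu hv
  have hBne : B ≠ B' := fun h => hne (by rw [h])
  have hBB' : ¬ B ⊆ B' := fun h => hBne (hB.eq_of_subset_isBase hB' h)
  obtain ⟨e, heB, heB'⟩ := not_subset.1 hBB'
  have he : e ∈ B \ B' := ⟨heB, heB'⟩
  -- the key cardinality claim
  have hcard1 : (B \ B').ncard = 1 := by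
    by_contra hc
    have h2 : 2 ≤ (B \ B').ncard := by
      have h1 : 0 < (B \ B').ncard := (Set.ncard_pos (Set.toFinite _)).2 ⟨e, he⟩
      omega
    obtain ⟨e', he', hee⟩ := Set.exists_ne_of_one_lt_ncard (s := B \ B') (by omega) e
    obtain ⟨f, hf, hbase1, hbase2⟩ := symm_exchange hB hB' (Set.toFinite B') he
    have hef : e ≠ f := fun h => hf.2 (h ▸ he.1)
    set x₁ : Fin n → ℝ := (insert f (B \ {e})).indicator (fun _ => (1:ℝ)) with hx₁
    set x₂ : Fin n → ℝ := (insert e (B' \ {f})).indicator (fun _ => (1:ℝ)) with hx₂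
    have hx₁S : x₁ ∈ S := by rw [hS]; exact ⟨_, hbase1, rfl⟩
    have hx₂S : x₂ ∈ S := by rw [hS]; exact ⟨_, hbase2, rfl⟩
    have hsum : B.indicator (fun _ => (1:ℝ)) + B'.indicator (fun _ => (1:ℝ)) = x₁ + x₂ := by
      funext i
      rw [hx₁, hx₂]
      simp only [Pi.add_apply, Set.indicator_apply, Set.mem_insert_iff, Set.mem_diff,
        Set.mem_singleton_iff]
      by_cases hie : i = e
      · subst hie
        simp [he.1, he.2, hef]
      by_cases hif : i = f
      · subst hif
        simp [hf.1, hf.2, hie]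
      by_cases hiB : i ∈ B <;> by_cases hiB' : i ∈ B' <;> simp [hiB, hiB', hie, hif]
    set m : Fin n → ℝ := (1/2 : ℝ) • B.indicator (fun _ => (1:ℝ)) +
      (1/2 : ℝ) • B'.indicator (fun _ => (1:ℝ)) with hm
    have hmseg : m ∈ segment ℝ (B.indicator (fun _ => (1:ℝ))) (B'.indicator (fun _ => (1:ℝ))) :=
      ⟨1/2, 1/2, by norm_num, by norm_num, by norm_num, rfl⟩
    have hmopen : m ∈ openSegment ℝ x₁ x₂ := by
      refine ⟨1/2, 1/2, by norm_num, by norm_num, by norm_num, ?_⟩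
      rw [hm, ← smul_add, ← smul_add, hsum]
    have hx₁seg := (hext.2 (subset_convexHull ℝ S hx₁S) (subset_convexHull ℝ S hx₂S)
      hmseg hmopen)
    have := zero_one_segment hne (ind_zero_one B) (ind_zero_one B') (ind_zero_one _) hx₁seg
    rcases this with h | h
    · have hBB : insert f (B \ {e}) = B := ind_inj h
      exact hf.2 (hBB ▸ mem_insert f _)
    · have hBB : insert f (B \ {e}) = B' := ind_inj h
      exact he'.2 (hBB ▸ mem_insert_of_mem f ⟨he'.1, hee⟩)
  have hcard2 : (B' \ B).ncard = 1 := by rw [hB'.ncard_diff_comm hB]; exact hcard1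
  obtain ⟨i₀, hi₀⟩ := Set.ncard_eq_one.1 hcard1
  obtain ⟨j₀, hj₀⟩ := Set.ncard_eq_one.1 hcard2
  have h₁ : ∀ k, (k ∈ B ∧ k ∉ B') ↔ k = i₀ := by
    intro k; rw [← Set.mem_singleton_iff, ← hi₀, Set.mem_diff]
  have h₂ : ∀ k, (k ∈ B' ∧ k ∉ B) ↔ k = j₀ := by
    intro k; rw [← Set.mem_singleton_iff, ← hj₀, Set.mem_diff]
  have hi₀B : i₀ ∈ B ∧ i₀ ∉ B' := (h₁ i₀).2 rfl
  have hj₀B : j₀ ∈ B' ∧ j₀ ∉ B := (h₂ j₀).2 rfl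
  have hij : i₀ ≠ j₀ := fun h => hj₀B.2 (h ▸ hi₀B.1)
  refine ⟨⟨i₀, j₀, 1, hij, one_ne_zero, ?_⟩, huS, hvS, ?_⟩
  · rw [one_smul]
    funext k
    have hk1 : (k = i₀) ↔ (k ∈ B ∧ k ∉ B') := (h₁ k).symm
    have hk2 : (k = j₀) ↔ (k ∈ B' ∧ k ∉ B) := (h₂ k).symm
    simp only [Pi.sub_apply, Pi.single_apply]
    by_cases hkB : k ∈ B <;> by_cases hkB' : k ∈ B'
    · rw [Set.indicator_of_mem hkB, Set.indicator_of_mem hkB',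
        if_neg (fun h => (hk1.1 h).2 hkB'), if_neg (fun h => (hk2.1 h).2 hkB)]
      norm_num
    · rw [Set.indicator_of_mem hkB, Set.indicator_of_notMem hkB',
        if_pos (hk1.2 ⟨hkB, hkB'⟩), if_neg (fun h => (hk2.1 h).2 hkB)]
    · rw [Set.indicator_of_notMem hkB, Set.indicator_of_mem hkB',
        if_neg (fun h => hkB (hk1.1 h).1), if_pos (hk2.2 ⟨hkB', hkB⟩)]
    · rw [Set.indicator_of_notMem hkB, Set.indicator_of_notMem hkB',
        if_neg (fun h => hkB (hk1.1 h).1), if_neg (fun h => hkB' (hk2.1 h).1)]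
  · rw [ind_supp, ind_supp, Set.symmDiff_def]
    rw [Set.ncard_union_eq disjoint_sdiff_sdiff (Set.toFinite _) (Set.toFinite _), hcard1, hcard2]
end

section
/- Let k ≥ r ≥ 1, d ≥ 1, n = k·2^d, and let W be the d×n binary matrix whose columns consist of k copies of each vector in {0,1}^d. Let S = S^n_r ⊂ {0,1}ⁿ be the set of all 0/1-vectors with exactly r ones (the uniform matroid of rank r). Then conv(WS) = [0, r]^d, the cube of side r; in particular conv(WS) has exactly 2^d vertices. -/
/-- Extreme points of an interval `[0,c]` in `ℝ` are the endpoints. -/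
lemma extremePoints_Icc_real {c : ℝ} (hc : 0 < c) :
    (Set.Icc (0 : ℝ) c).extremePoints ℝ = {0, c} := by
  ext x
  simp only [mem_extremePoints, Set.mem_insert_iff, Set.mem_singleton_iff]
  constructor
  · rintro ⟨hx, h⟩
    by_contra hne
    push_neg at hne
    have h0 : (0 : ℝ) ∈ Set.Icc (0 : ℝ) c := by constructor <;> [rfl; exact hc.le]
    have hcmem : c ∈ Set.Icc (0 : ℝ) c := by constructor <;> [exact hc.le; rfl]
    have hxo : x ∈ openSegment ℝ (0 : ℝ) c := by
      rw [openSegment_eq_Ioo hc]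
      exact ⟨lt_of_le_of_ne hx.1 (Ne.symm hne.1), lt_of_le_of_ne hx.2 hne.2⟩
    obtain ⟨h1, h2⟩ := h 0 h0 c hcmem hxo
    exact hne.1 h1.symm
  · rintro (rfl | rfl)
    · refine ⟨⟨le_refl 0, hc.le⟩, ?_⟩
      rintro x₁ hx₁ x₂ hx₂ ⟨a, b, ha, hb, hab, hx⟩
      simp only [smul_eq_mul] at hx
      constructor <;> nlinarith [hx₁.1, hx₂.1]
    · refine ⟨⟨hc.le, le_refl _⟩, ?_⟩
      rintro x₁ hx₁ x₂ hx₂ ⟨a, b, ha, hb, hab, hx⟩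
      simp only [smul_eq_mul] at hx
      constructor <;> nlinarith [hx₁.2, hx₂.2]

lemma card_filter_val_lt (k r : ℕ) (hkr : r ≤ k) :
    (Finset.univ.filter fun a : Fin k => (a : ℕ) < r).card = r := by
  have himg : (Finset.univ.filter fun a : Fin k => (a : ℕ) < r).image Fin.val
      = Finset.range r := by
    ext n
    simp only [Finset.mem_image, Finset.mem_filter, Finset.mem_univ, true_and,
      Finset.mem_range]
    constructor
    · rintro ⟨a, ha, rfl⟩; exact ha
    · intro hn; exact ⟨⟨n, lt_of_lt_of_le hn hkr⟩, hn, rfl⟩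
  calc (Finset.univ.filter fun a : Fin k => (a : ℕ) < r).card
      = ((Finset.univ.filter fun a : Fin k => (a : ℕ) < r).image Fin.val).card :=
        (Finset.card_image_of_injective _ Fin.val_injective).symm
    _ = (Finset.range r).card := by rw [himg]
    _ = r := Finset.card_range r

/-- For `k ≥ r ≥ 1`, the projection of the uniform matroid `S^n_r` (`n = k·2^d`) by the
binary matrix `W^k_d` whose columns consist of `k` copies of each vector in `{0,1}^d`
satisfies `conv(WS) = [0,r]^d`; in particular it has exactly `2^d` vertices.
Columns are indexed by `Fin k × (Fin d → Bool)`. -/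
theorem stmt_8 (d k r : ℕ) (hd : 1 ≤ d) (hr : 1 ≤ r) (hkr : r ≤ k)
    (W : Matrix (Fin d) (Fin k × (Fin d → Bool)) ℝ)
    (hW : ∀ i c, W i c = if c.2 i then 1 else 0)
    (S : Set ((Fin k × (Fin d → Bool)) → ℝ))
    (hS : S = {x | (∀ j, x j = 0 ∨ x j = 1) ∧ {j | x j = 1}.ncard = r}) :
    convexHull ℝ (W.mulVec '' S) = {y : Fin d → ℝ | ∀ i, y i ∈ Set.Icc (0 : ℝ) r} ∧
    (Set.extremePoints ℝ (convexHull ℝ (W.mulVec '' S))).ncard = 2 ^ d := by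
  have hr0 : (0 : ℝ) < (r : ℝ) := by exact_mod_cast hr
  -- the cube as a pi set
  have hcube : {y : Fin d → ℝ | ∀ i, y i ∈ Set.Icc (0 : ℝ) r} =
      Set.pi Set.univ (fun _ : Fin d => Set.Icc (0 : ℝ) r) := by
    ext y; simp only [Set.mem_setOf_eq, Set.mem_pi, Set.mem_univ, true_imp_iff]
  -- corners
  set corners : Set (Fin d → ℝ) := Set.pi Set.univ (fun _ : Fin d => ({0, (r : ℝ)} : Set ℝ))
    with hcorners
  -- Step A: convexHull corners = cube
  have hA : convexHull ℝ corners = Set.pi Set.univ (fun _ : Fin d => Set.Icc (0 : ℝ) r) := by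
    rw [hcorners, convexHull_pi]
    congr 1
    funext i
    rw [convexHull_pair, segment_eq_Icc hr0.le]
  -- Step B: corners ⊆ W.mulVec '' S
  have hB : corners ⊆ W.mulVec '' S := by
    rintro y hy
    simp only [hcorners, Set.mem_pi, Set.mem_univ, true_imp_iff] at hy
    set b₀ : Fin d → Bool := fun i => decide (y i = r) with hb₀
    set x : (Fin k × (Fin d → Bool)) → ℝ :=
      fun c => if c.2 = b₀ ∧ (c.1 : ℕ) < r then 1 else 0 with hx
    refine ⟨x, ?_, ?_⟩
    · rw [hS]
      constructor
      · intro j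
        by_cases h : j.2 = b₀ ∧ (j.1 : ℕ) < r <;> simp [hx, h]
      · have hset : {j | x j = 1} =
            (fun a : Fin r => ((Fin.castLE hkr a, b₀) : Fin k × (Fin d → Bool))) '' Set.univ := by
          ext c
          simp only [hx, Set.mem_setOf_eq, Set.mem_image, Set.mem_univ, true_and]
          constructor
          · intro hc
            by_cases h : c.2 = b₀ ∧ (c.1 : ℕ) < r
            · exact ⟨⟨(c.1 : ℕ), h.2⟩, by
                ext <;> simp [h.1.symm]⟩
            · simp [h] at hc
          · rintro ⟨a, rfl⟩
            simp [a.isLt]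
        rw [hset, Set.ncard_image_of_injective _ (fun a b hab => by
          have := congrArg (fun p => ((p : Fin k × (Fin d → Bool)).1 : ℕ)) hab
          exact Fin.ext this), Set.ncard_univ, Nat.card_eq_fintype_card, Fintype.card_fin]
    · funext i
      have hWx : W.mulVec x i =
          ∑ c : Fin k × (Fin d → Bool), (if c.2 i then (1:ℝ) else 0) *
            (if c.2 = b₀ ∧ (c.1 : ℕ) < r then 1 else 0) := by
        simp only [Matrix.mulVec, dotProduct, hW, hx]
      rw [hWx, Fintype.sum_prod_type]
      have hinner : ∀ a : Fin k,
          (∑ b : Fin d → Bool, (if b i then (1:ℝ) else 0) *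
            (if b = b₀ ∧ (a : ℕ) < r then 1 else 0)) =
          (if b₀ i then (1:ℝ) else 0) * (if (a : ℕ) < r then 1 else 0) := by
        intro a
        rw [Finset.sum_eq_single b₀]
        · by_cases h : (a : ℕ) < r <;> simp [h]
        · intro b _ hb
          simp [hb]
        · intro h; exact absurd (Finset.mem_univ _) h
      rw [Finset.sum_congr rfl fun a _ => hinner a, ← Finset.mul_sum]
      have hsum : (∑ a : Fin k, (if (a : ℕ) < r then (1:ℝ) else 0)) = r := by
        simp only [Finset.sum_boole]
        rw [card_filter_val_lt k r hkr]
      rw [hsum]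
      simp only [Set.mem_insert_iff, Set.mem_singleton_iff] at hy
      rcases hy i with h0 | hR
      · have : b₀ i = false := by
          simp [hb₀, h0, (show (0:ℝ) ≠ ↑r from hr0.ne)]
        simp [this, h0]
      · have : b₀ i = true := by simp [hb₀, hR]
        simp [this, hR]
  -- Step C: W.mulVec '' S ⊆ cube
  have hC : W.mulVec '' S ⊆ {y : Fin d → ℝ | ∀ i, y i ∈ Set.Icc (0 : ℝ) r} := by
    rintro _ ⟨x, hxS, rfl⟩ i
    rw [hS] at hxS
    obtain ⟨h01, hcard⟩ := hxS
    have hx0 : ∀ j, 0 ≤ x j := fun j => by rcases h01 j with h | h <;> simp [h]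
    have hx1 : ∀ j, x j ≤ 1 := fun j => by rcases h01 j with h | h <;> simp [h]
    have hxsum : (∑ j, x j) = r := by
      have : ∀ j, x j = if x j = 1 then (1:ℝ) else 0 := by
        intro j; rcases h01 j with h | h <;> simp [h]
      rw [Finset.sum_congr rfl fun j _ => this j, Finset.sum_boole]
      have : {j | x j = 1}.ncard = (Finset.univ.filter fun j => x j = 1).card := by
        rw [Set.ncard_eq_toFinset_card']
        congr 1
        ext j; simp
      rw [this] at hcard
      exact_mod_cast hcard
    have hmv : W.mulVec x i = ∑ j, W i j * x j := rfl
    constructor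
    · rw [hmv]
      apply Finset.sum_nonneg
      intro j _
      rw [hW]
      by_cases h : j.2 i <;> simp [h, hx0 j]
    · rw [hmv, ← hxsum]
      apply Finset.sum_le_sum
      intro j _
      rw [hW]
      by_cases h : j.2 i <;> simp [h, hx0 j]
  -- main equality
  have hmain : convexHull ℝ (W.mulVec '' S) = {y : Fin d → ℝ | ∀ i, y i ∈ Set.Icc (0 : ℝ) r} := by
    apply le_antisymm
    · apply convexHull_min hC
      rw [hcube]
      exact convex_pi fun i _ => convex_Icc (0:ℝ) (r:ℝ)
    · rw [hcube, ← hA]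
      exact convexHull_mono hB
  refine ⟨hmain, ?_⟩
  rw [hmain, hcube, extremePoints_pi]
  have hext : (fun i : Fin d => (Set.Icc (0:ℝ) r).extremePoints ℝ) =
      fun _ : Fin d => ({0, (r:ℝ)} : Set ℝ) := by
    funext i; exact extremePoints_Icc_real hr0
  rw [hext]
  -- count: |{0,r}^d| = 2^d
  rw [← Nat.card_coe_set_eq, Nat.card_congr (Equiv.Set.univPi _), Nat.card_pi]
  have h2 : Nat.card ({0, (r:ℝ)} : Set ℝ) = 2 := by
    rw [Nat.card_coe_set_eq, Set.ncard_pair (show (0:ℝ) ≠ r from hr0.ne)]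
  simp only [h2, Finset.prod_const, Finset.card_univ, Fintype.card_fin]
end

section
/- Let d ≥ 1, n = 2^d, W the d×n binary matrix whose columns are all vectors of {0,1}^d, and S = S^n_2 the set of 0/1-vectors with exactly two ones. Then the set of vertices (extreme points) of conv(WS) equals V_1, the set of vectors in {0,1,2}^d with exactly one coordinate equal to 1. Hence conv(WS) has exactly d·2^{d-1} vertices. -/
open Finset

/-- A strict unique maximizer of a linear functional over a finite set is an
extreme point of the convex hull. -/
lemma aux_unique_max_extreme {E : Type*} [AddCommGroup E] [Module ℝ E]
    (F : Finset E) (l : E →ₗ[ℝ] ℝ) (v : E) (hv : v ∈ F)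
    (hmax : ∀ y ∈ F, l y ≤ l v)
    (huniq : ∀ y ∈ F, l y = l v → y = v) :
    v ∈ Set.extremePoints ℝ (convexHull ℝ (F : Set E)) := by
  have hb : ∀ x ∈ convexHull ℝ (F : Set E), l x ≤ l v := by
    intro x hx
    have hsub : convexHull ℝ (F : Set E) ⊆ {x | l x ≤ l v} :=
      convexHull_min (fun y hy => hmax y hy) (convex_halfSpace_le (LinearMap.isLinear l) _)
    exact hsub hx
  have key : ∀ x ∈ convexHull ℝ (F : Set E), l x = l v → x = v := by
    intro x hx hlx
    rw [Finset.mem_convexHull'] at hx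
    obtain ⟨w, hw0, hw1, hwx⟩ := hx
    have hlsum : ∑ y ∈ F, w y * l y = l v := by
      have h1 := congrArg l hwx
      simpa [map_sum, map_smul, smul_eq_mul, hlx] using h1
    have hsum : ∑ y ∈ F, w y * (l v - l y) = 0 := by
      have : ∑ y ∈ F, w y * (l v - l y)
          = (∑ y ∈ F, w y) * l v - ∑ y ∈ F, w y * l y := by
        rw [Finset.sum_mul]
        rw [← Finset.sum_sub_distrib]
        congr 1; ext y; ring
      rw [this, hw1, hlsum]; ring
    have hterm : ∀ y ∈ F, w y * (l v - l y) = 0 := by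
      have hnn : ∀ y ∈ F, 0 ≤ w y * (l v - l y) := fun y hy =>
        mul_nonneg (hw0 y hy) (by linarith [hmax y hy])
      exact (Finset.sum_eq_zero_iff_of_nonneg hnn).mp hsum
    have : ∀ y ∈ F, w y • y = w y • v := by
      intro y hy
      rcases mul_eq_zero.mp (hterm y hy) with h | h
      · rw [h]; simp
      · rw [huniq y hy (by linarith)]
    calc x = ∑ y ∈ F, w y • y := hwx.symm
      _ = ∑ y ∈ F, w y • v := Finset.sum_congr rfl this
      _ = (∑ y ∈ F, w y) • v := by rw [Finset.sum_smul]
      _ = v := by rw [hw1, one_smul]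
  refine ⟨subset_convexHull ℝ _ hv, ?_⟩
  rintro x₁ h₁ x₂ h₂ ⟨a, b, ha, hb', hab, hseg⟩
  have hl : a * l x₁ + b * l x₂ = l v := by
    have := congrArg l hseg
    simpa [map_add, map_smul, smul_eq_mul] using this
  have h1 : l x₁ ≤ l v := hb _ h₁
  have h2 : l x₂ ≤ l v := hb _ h₂
  have e1 : l x₁ = l v := by
    by_contra hne
    have hlt := lt_of_le_of_ne h1 hne
    have t1 := mul_lt_mul_of_pos_left hlt ha
    have t2 := mul_le_mul_of_nonneg_left h2 hb'.le
    have h3 : a * l v + b * l v = l v := by rw [← add_mul, hab, one_mul]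
    linarith
  have e2 : l x₂ = l v := by
    by_contra hne
    have hlt := lt_of_le_of_ne h2 hne
    have t1 := mul_lt_mul_of_pos_left hlt hb'
    have t2 := mul_le_mul_of_nonneg_left h1 ha.le
    have h3 : a * l v + b * l v = l v := by rw [← add_mul, hab, one_mul]
    linarith
  exact key x₁ h₁ e1

section aux
variable {d : ℕ}

/-- The set `WS`. -/
def auxA (d : ℕ) : Set (Fin d → ℝ) :=
  {w | (∀ i, w i = 0 ∨ w i = 1 ∨ w i = 2) ∧ ∃ i, w i = 1}

lemma auxA_finite (d : ℕ) : (auxA d).Finite := by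
  apply Set.Finite.subset (Set.finite_range (fun f : Fin d → Fin 3 => fun i => (f i : ℝ)))
  rintro w ⟨hw, -⟩
  refine ⟨fun i => if w i = 0 then 0 else if w i = 1 then 1 else 2, funext fun i => ?_⟩
  rcases hw i with h | h | h <;> simp [h]

/-- image characterization -/
lemma aux_image (d : ℕ) (W : Matrix (Fin d) (Fin d → Bool) ℝ)
    (hW : ∀ i c, W i c = if c i then 1 else 0) :
    W.mulVec '' {x | (∀ j, x j = 0 ∨ x j = 1) ∧ {j | x j = 1}.ncard = 2} = auxA d := by
  have hmv : ∀ (c₁ c₂ : Fin d → Bool) (i : Fin d),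
      W.mulVec (fun c => (if c = c₁ then (1:ℝ) else 0) + (if c = c₂ then 1 else 0)) i
        = (if c₁ i then 1 else 0) + (if c₂ i then 1 else 0) := by
    intro c₁ c₂ i
    simp only [Matrix.mulVec, dotProduct, hW, mul_add, Finset.sum_add_distrib,
      mul_ite, mul_one, mul_zero, Finset.sum_ite_eq', Finset.mem_univ, if_true]
  ext w
  constructor
  · rintro ⟨x, ⟨hx01, hx2⟩, rfl⟩
    obtain ⟨c₁, c₂, hne, hset⟩ := Set.ncard_eq_two.mp hx2
    have hxval : x = fun c => (if c = c₁ then (1:ℝ) else 0) + (if c = c₂ then 1 else 0) := by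
      funext c
      rcases hx01 c with h | h
      · have hc : c ∉ ({c₁, c₂} : Set (Fin d → Bool)) := by
          rw [← hset]; simp [h]
        simp only [Set.mem_insert_iff, Set.mem_singleton_iff, not_or] at hc
        simp [hc.1, hc.2, h]
      · have hc : c ∈ ({c₁, c₂} : Set (Fin d → Bool)) := by rw [← hset]; exact h
        rcases hc with rfl | hc
        · simp [hne, h]
        · rw [Set.mem_singleton_iff] at hc
          subst hc
          simp [hne.symm, h]
    rw [hxval]
    constructor
    · intro i
      rw [hmv]
      by_cases h1 : c₁ i <;> by_cases h2 : c₂ i <;> simp [h1, h2] <;> norm_num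
    · obtain ⟨j, hj⟩ := Function.ne_iff.mp hne
      refine ⟨j, ?_⟩
      rw [hmv]
      cases h1 : c₁ j <;> cases h2 : c₂ j <;> simp [h1, h2] at hj ⊢
  · rintro ⟨hw, i₀, hi₀⟩
    classical
    set c₁ : Fin d → Bool := fun i => decide (w i = 2) with hc₁
    set c₂ : Fin d → Bool := fun i => !decide (w i = 0) with hc₂
    have hne : c₁ ≠ c₂ := by
      intro h
      have := congrFun h i₀
      simp [hc₁, hc₂, hi₀] at this
    refine ⟨fun c => (if c = c₁ then (1:ℝ) else 0) + (if c = c₂ then 1 else 0), ⟨?_, ?_⟩, ?_⟩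
    · intro c
      rcases eq_or_ne c c₁ with rfl | h1
      · simp [hne]
      · rcases eq_or_ne c c₂ with rfl | h2
        · simp [fun h : c₂ = c₁ => hne h.symm, h1]
        · simp [h1, h2]
    · have : {j | ((if j = c₁ then (1:ℝ) else 0) + (if j = c₂ then 1 else 0)) = 1}
          = {c₁, c₂} := by
        ext c
        simp only [Set.mem_setOf_eq, Set.mem_insert_iff, Set.mem_singleton_iff]
        rcases eq_or_ne c c₁ with rfl | h1
        · simp [hne]
        · rcases eq_or_ne c c₂ with rfl | h2
          · simp [fun h : c₂ = c₁ => hne h.symm, h1]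
          · simp [h1, h2]
      rw [this]
      exact Set.ncard_pair hne
    · funext i
      rw [hmv]
      rcases hw i with h | h | h <;>
        simp [hc₁, hc₂, h] <;> norm_num
end aux

section count
/-- the parametrization of `V₁` -/
def auxg (d : ℕ) (p : Σ _ : Fin d, Fin d → Bool) : Fin d → ℝ :=
  fun j => if j = p.1 then 1 else if p.2 j then 2 else 0

def auxP (d : ℕ) : Finset (Σ _ : Fin d, Fin d → Bool) :=
  Finset.univ.sigma (fun i => Finset.univ.filter (fun b => b i = false))

lemma auxg_one_iff (d : ℕ) (p : Σ _ : Fin d, Fin d → Bool) (j : Fin d) :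
    auxg d p j = 1 ↔ j = p.1 := by
  unfold auxg
  rcases eq_or_ne j p.1 with rfl | h
  · simp
  · rcases hb : p.2 j <;> simp [h, hb]

lemma auxV_eq (d : ℕ) :
    {v : Fin d → ℝ | (∀ i, v i = 0 ∨ v i = 1 ∨ v i = 2) ∧ {i | v i = 1}.ncard = 1}
      = ↑((auxP d).image (auxg d)) := by
  ext v
  simp only [Set.mem_setOf_eq, Finset.coe_image, Set.mem_image, Finset.mem_coe,
    Finset.mem_image]
  constructor
  · rintro ⟨h012, h1⟩
    obtain ⟨i₀, hi₀⟩ := Set.ncard_eq_one.mp h1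
    have hv1 : ∀ j, v j = 1 ↔ j = i₀ := by
      intro j
      have h := Set.ext_iff.mp hi₀ j
      simpa using h
    refine ⟨⟨i₀, fun j => decide (v j = 2)⟩, ?_, ?_⟩
    · simp only [auxP, Finset.mem_sigma, Finset.mem_univ, Finset.mem_filter, true_and]
      simp [((hv1 i₀).mpr rfl)]
    · funext j
      unfold auxg
      rcases eq_or_ne j i₀ with rfl | h
      · simp [(hv1 j).mpr rfl]
      · have hj1 : v j ≠ 1 := fun hc => h ((hv1 j).mp hc)
        rcases h012 j with h0 | h0 | h0
        · simp [h, h0]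
        · exact absurd h0 hj1
        · simp [h, h0]
  · rintro ⟨p, hp, rfl⟩
    constructor
    · intro i
      unfold auxg
      rcases eq_or_ne i p.1 with rfl | h
      · simp
      · rcases hb : p.2 i <;> simp [h, hb]
    · have : {i | auxg d p i = 1} = {p.1} := by
        ext i; simp [auxg_one_iff]
      rw [this, Set.ncard_singleton]

lemma auxg_injOn (d : ℕ) : Set.InjOn (auxg d) ↑(auxP d) := by
  rintro ⟨p1, p2⟩ hp ⟨q1, q2⟩ hq h
  have hp' : p2 p1 = false := by
    have := Finset.mem_coe.mp hp
    simpa [auxP] using this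
  have hq' : q2 q1 = false := by
    have := Finset.mem_coe.mp hq
    simpa [auxP] using this
  have h1 : p1 = q1 := by
    exact (auxg_one_iff d ⟨q1, q2⟩ p1).mp
      (by rw [← h]; exact (auxg_one_iff d ⟨p1, p2⟩ p1).mpr rfl)
  subst h1
  have h2 : p2 = q2 := by
    funext j
    rcases eq_or_ne j p1 with rfl | hj
    · rw [hp', hq']
    · have hthis := congrFun h j
      unfold auxg at hthis
      simp only [hj, if_false] at hthis
      cases hb : p2 j
      · cases hc : q2 j
        · rfl
        · simp only [hb, hc] at hthis
          norm_num at hthis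
      · cases hc : q2 j
        · simp only [hb, hc] at hthis
          norm_num at hthis
        · rfl
  rw [h2]

lemma auxP_card (d : ℕ) (hd : 1 ≤ d) : (auxP d).card = d * 2 ^ (d - 1) := by
  rw [auxP, Finset.card_sigma]
  have hcard : ∀ i : Fin d,
      (Finset.univ.filter (fun b : Fin d → Bool => b i = false)).card = 2 ^ (d - 1) := by
    intro i
    have e : {b : Fin d → Bool // b i = false} ≃ ({j : Fin d // j ≠ i} → Bool) :=
      { toFun := fun b j => b.1 j.1
        invFun := fun f => ⟨fun j => if h : j = i then false else f ⟨j, h⟩, by simp⟩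
        left_inv := by
          rintro ⟨b, hb⟩
          ext j
          by_cases h : j = i
          · subst h; simp [hb]
          · simp [h]
        right_inv := by
          intro f
          funext j
          simp [j.2] }
    have hsub : Fintype.card {j : Fin d // j ≠ i} = d - 1 := by
      rw [Fintype.card_subtype_compl, Fintype.card_subtype_eq, Fintype.card_fin]
    calc (Finset.univ.filter (fun b : Fin d → Bool => b i = false)).card
        = Fintype.card {b : Fin d → Bool // b i = false} := (Fintype.card_subtype _).symm
      _ = Fintype.card ({j : Fin d // j ≠ i} → Bool) := Fintype.card_congr e
      _ = 2 ^ (d - 1) := by rw [Fintype.card_fun, Fintype.card_bool, hsub]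
  simp only [hcard]
  simp [Finset.sum_const, Finset.card_univ, mul_comm]
end count

/-- For `W^1_d` the `d × 2^d` binary matrix whose columns are all vectors of `{0,1}^d`
and `S = S^{2^d}_2` the 0/1-vectors with exactly two ones, the vertex set of
`conv(WS)` is `V₁`, the set of vectors in `{0,1,2}^d` with exactly one coordinate
equal to `1`; hence there are exactly `d·2^{d-1}` vertices. -/
theorem stmt_10 (d : ℕ) (hd : 1 ≤ d)
    (W : Matrix (Fin d) (Fin d → Bool) ℝ)
    (hW : ∀ i c, W i c = if c i then 1 else 0)
    (S : Set ((Fin d → Bool) → ℝ))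
    (hS : S = {x | (∀ j, x j = 0 ∨ x j = 1) ∧ {j | x j = 1}.ncard = 2}) :
    Set.extremePoints ℝ (convexHull ℝ (W.mulVec '' S)) =
      {v : Fin d → ℝ | (∀ i, v i = 0 ∨ v i = 1 ∨ v i = 2) ∧ {i | v i = 1}.ncard = 1} ∧
    (Set.extremePoints ℝ (convexHull ℝ (W.mulVec '' S))).ncard = d * 2 ^ (d - 1) := by
  subst hS
  have hF := auxA_finite d
  have hA : W.mulVec '' {x | (∀ j, x j = 0 ∨ x j = 1) ∧ {j | x j = 1}.ncard = 2}
      = ↑hF.toFinset := by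
    rw [Set.Finite.coe_toFinset]
    exact aux_image d W hW
  rw [hA]
  have hE : Set.extremePoints ℝ (convexHull ℝ (↑hF.toFinset : Set (Fin d → ℝ)))
      = {v : Fin d → ℝ | (∀ i, v i = 0 ∨ v i = 1 ∨ v i = 2) ∧ {i | v i = 1}.ncard = 1} := by
    apply Set.Subset.antisymm
    · intro x hx
      have hxA : x ∈ auxA d := by
        have := extremePoints_convexHull_subset hx
        rwa [Finset.mem_coe, Set.Finite.mem_toFinset hF] at this
      obtain ⟨hx012, i₀, hi₀⟩ := hxA
      have huniq1 : ∀ j, x j = 1 → j = i₀ := by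
        intro j hj
        by_contra hne
        -- midpoint contradiction
        set yp : Fin d → ℝ := Function.update x j 2 with hyp
        set ym : Fin d → ℝ := Function.update x j 0 with hym
        have hyA : ∀ t : ℝ, (t = 0 ∨ t = 1 ∨ t = 2) → Function.update x j t ∈ auxA d := by
          intro t ht
          constructor
          · intro i
            rcases eq_or_ne i j with rfl | h
            · simpa using ht
            · rw [Function.update_of_ne h]
              exact hx012 i
          · exact ⟨i₀, by rw [Function.update_of_ne (fun h => hne h.symm)]; exact hi₀⟩
        have hpm : x ∈ openSegment ℝ ym yp := by
          refine ⟨1/2, 1/2, by norm_num, by norm_num, by norm_num, ?_⟩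
          funext i
          rcases eq_or_ne i j with rfl | h
          · simp [hym, hyp, Function.update_self, hj]
          · simp [hym, hyp, Function.update_of_ne h]
            ring
        have hmem : ∀ t : ℝ, (t = 0 ∨ t = 1 ∨ t = 2) →
            Function.update x j t ∈ convexHull ℝ (↑hF.toFinset : Set (Fin d → ℝ)) := by
          intro t ht
          apply subset_convexHull
          rw [Finset.mem_coe, Set.Finite.mem_toFinset hF]
          exact hyA t ht
        have := hx.2 (hmem 0 (by norm_num)) (hmem 2 (by norm_num)) hpm
        have hcontr := congrFun this j
        rw [Function.update_self] at hcontr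
        rw [← hcontr] at hj
        norm_num at hj
      refine ⟨hx012, ?_⟩
      rw [Set.ncard_eq_one]
      exact ⟨i₀, Set.eq_singleton_iff_unique_mem.mpr ⟨hi₀, huniq1⟩⟩
    · intro v hv
      obtain ⟨hv012, hv1⟩ := hv
      obtain ⟨i₀, hi₀⟩ := Set.ncard_eq_one.mp hv1
      have hv1' : ∀ j, v j = 1 ↔ j = i₀ := by
        intro j
        have h := Set.ext_iff.mp hi₀ j
        simpa using h
      have hvA : v ∈ auxA d := ⟨hv012, i₀, (hv1' i₀).mpr rfl⟩
      set l : (Fin d → ℝ) →ₗ[ℝ] ℝ :=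
        { toFun := fun w => ∑ i, (v i - 1) * w i
          map_add' := fun a b => by
            simp [mul_add, Finset.sum_add_distrib]
          map_smul' := fun c a => by
            simp [Finset.mul_sum, smul_eq_mul, mul_left_comm] } with hl
      have hlapp : ∀ w : Fin d → ℝ, l w = ∑ i, (v i - 1) * w i := fun w => rfl
      have hterm : ∀ (y : Fin d → ℝ), y ∈ auxA d → ∀ i,
          (v i - 1) * y i ≤ (v i - 1) * v i := by
        intro y hy i
        rcases hv012 i with h | h | h <;> rcases hy.1 i with g | g | g <;>
          rw [h, g] <;> norm_num
      have hmax : ∀ y ∈ hF.toFinset, l y ≤ l v := by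
        intro y hy
        rw [Set.Finite.mem_toFinset hF] at hy
        rw [hlapp, hlapp]
        exact Finset.sum_le_sum (fun i _ => hterm y hy i)
      have huniq : ∀ y ∈ hF.toFinset, l y = l v → y = v := by
        intro y hy hly
        rw [Set.Finite.mem_toFinset hF] at hy
        rw [hlapp, hlapp] at hly
        have hzero : ∀ i ∈ Finset.univ,
            (v i - 1) * v i - (v i - 1) * y i = 0 := by
          have hnn : ∀ i ∈ Finset.univ, 0 ≤ (v i - 1) * v i - (v i - 1) * y i :=
            fun i _ => by linarith [hterm y hy i]
          have hs : ∑ i, ((v i - 1) * v i - (v i - 1) * y i) = 0 := by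
            rw [Finset.sum_sub_distrib]
            have h1 : ∑ i, (v i - 1) * y i = ∑ i, (v i - 1) * v i := hly
            rw [h1, sub_self]
          exact (Finset.sum_eq_zero_iff_of_nonneg hnn).mp hs
        have hcoord : ∀ i, v i ≠ 1 → y i = v i := by
          intro i hne
          have h0 := hzero i (Finset.mem_univ i)
          rcases hv012 i with h | h | h
          · rcases hy.1 i with g | g | g <;> rw [h, g] at h0 <;> rw [g, h] <;> norm_num at h0
          · exact absurd h hne
          · rcases hy.1 i with g | g | g <;> rw [h, g] at h0 <;> rw [g, h] <;> norm_num at h0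
        have hyi₀ : y i₀ = 1 := by
          obtain ⟨j, hj⟩ := hy.2
          rcases eq_or_ne j i₀ with rfl | hne
          · exact hj
          · have hvj : v j ≠ 1 := fun hc => hne ((hv1' j).mp hc)
            have := hcoord j hvj
            rw [hj] at this
            exact absurd this.symm hvj
        funext i
        rcases eq_or_ne i i₀ with rfl | hne
        · rw [hyi₀, (hv1' i).mpr rfl]
        · exact hcoord i (fun hc => hne ((hv1' i).mp hc))
      exact aux_unique_max_extreme hF.toFinset l v
        ((Set.Finite.mem_toFinset hF).mpr hvA) hmax huniq
  refine ⟨hE, ?_⟩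
  rw [hE, auxV_eq, Set.ncard_coe_finset, Finset.card_image_of_injOn (auxg_injOn d),
    auxP_card d hd]
end

section
/- Let A be an integer m×n matrix and let S = {x ∈ ℤⁿ : Ax = b, l ≤ x ≤ u} be nonempty and finite, for some b ∈ ℤ^m and bounds l, u ∈ ℤⁿ. Then every edge of conv(S) is parallel to some element of the Graver basis 𝒢(A); consequently the edge complexity of S satisfies e(S) ≤ max{‖g‖₁ : g ∈ 𝒢(A)}. -/
/-- The conformal (componentwise sign-compatible domination) partial order `x ⊑ y`. -/
def Conforms {n : ℕ} (x y : Fin n → ℤ) : Prop :=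
  ∀ i, 0 ≤ x i * y i ∧ |x i| ≤ |y i|

/-- The Graver basis of an integer matrix: the `⊑`-minimal nonzero integer
vectors in its kernel. -/
def GraverBasis {m n : ℕ} (A : Matrix (Fin m) (Fin n) ℤ) : Set (Fin n → ℤ) :=
  {x | x ≠ 0 ∧ A.mulVec x = 0 ∧
    ∀ y : Fin n → ℤ, y ≠ 0 → A.mulVec y = 0 → Conforms y x → y = x}

lemma conf_trans_comp (a c d : ℤ) (h1 : 0 ≤ a * c) (h2 : |a| ≤ |c|)
    (h3 : 0 ≤ c * d) (h4 : |c| ≤ |d|) : 0 ≤ a * d ∧ |a| ≤ |d| := by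
  rcases abs_cases a with ⟨ha1, ha2⟩ | ⟨ha1, ha2⟩ <;>
  rcases abs_cases c with ⟨hc1, hc2⟩ | ⟨hc1, hc2⟩ <;>
  rcases abs_cases d with ⟨hd1, hd2⟩ | ⟨hd1, hd2⟩ <;>
  constructor <;> nlinarith

lemma conf_sub_comp (g h : ℤ) (h1 : 0 ≤ g * h) (h2 : |g| ≤ |h|) :
    0 ≤ (h - g) * h ∧ |h - g| ≤ |h| := by
  rcases abs_cases g with ⟨hg1, hg2⟩ | ⟨hg1, hg2⟩ <;>
  rcases abs_cases h with ⟨hh1, hh2⟩ | ⟨hh1, hh2⟩ <;>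
  rcases abs_cases (h - g) with ⟨hs1, hs2⟩ | ⟨hs1, hs2⟩ <;>
  constructor <;> nlinarith

lemma bound_comp (lo up x z y : ℤ) (hx1 : lo ≤ x) (hx2 : x ≤ up) (hz1 : lo ≤ z) (hz2 : z ≤ up)
    (h1 : 0 ≤ y * (z - x)) (h2 : |y| ≤ |z - x|) : lo ≤ x + y ∧ x + y ≤ up := by
  rcases abs_cases y with ⟨hy1, hy2⟩ | ⟨hy1, hy2⟩ <;>
  rcases abs_cases (z - x) with ⟨hs1, hs2⟩ | ⟨hs1, hs2⟩ <;>
  constructor <;> nlinarith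

lemma eq_of_natAbs_eq (a b : ℤ) (h0 : 0 ≤ a * b) (h : a.natAbs = b.natAbs) : a = b := by
  rcases le_or_gt 0 a with ha | ha <;> rcases le_or_gt 0 b with hb | hb
  · omega
  · have ha' : 0 < a := by omega
    nlinarith
  · have hb' : 0 < b := by omega
    nlinarith
  · omega

lemma exists_graver_conform {m n : ℕ} (A : Matrix (Fin m) (Fin n) ℤ) (h : Fin n → ℤ)
    (hne : h ≠ 0) (hker : A.mulVec h = 0) : ∃ g ∈ GraverBasis A, Conforms g h := by
  classical
  have hP : ∃ k, ∃ y : Fin n → ℤ, y ≠ 0 ∧ A.mulVec y = 0 ∧ Conforms y h ∧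
      ∑ i, (y i).natAbs = k :=
    ⟨_, h, hne, hker, fun i => ⟨mul_self_nonneg _, le_rfl⟩, rfl⟩
  obtain ⟨y, hy0, hyker, hyconf, hysum⟩ := Nat.find_spec hP
  refine ⟨y, ⟨hy0, hyker, ?_⟩, hyconf⟩
  intro z hz0 hzker hzy
  have hzh : Conforms z h := fun i =>
    conf_trans_comp _ _ _ (hzy i).1 (hzy i).2 (hyconf i).1 (hyconf i).2
  have hle : ∀ i : Fin n, (z i).natAbs ≤ (y i).natAbs := by
    intro i
    have := (hzy i).2
    rw [Int.abs_eq_natAbs, Int.abs_eq_natAbs, Int.ofNat_le] at this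
    exact this
  have hsumle : ∑ i, (z i).natAbs ≤ ∑ i, (y i).natAbs :=
    Finset.sum_le_sum fun i _ => hle i
  have hge : Nat.find hP ≤ ∑ i, (z i).natAbs :=
    Nat.find_min' hP ⟨z, hz0, hzker, hzh, rfl⟩
  have hsumeq : ∑ i, (z i).natAbs = ∑ i, (y i).natAbs := le_antisymm hsumle (by omega)
  have heq := (Finset.sum_eq_sum_iff_of_le fun i _ => hle i).1 hsumeq
  funext i
  exact eq_of_natAbs_eq _ _ (hzy i).1 (heq i (Finset.mem_univ i))

lemma endpoint_extreme_s15 {n : ℕ} {p q : Fin n → ℝ} (hpq : p ≠ q) :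
    p ∈ (segment ℝ p q).extremePoints ℝ := by
  rw [mem_extremePoints_iff_forall_segment]
  refine ⟨left_mem_segment _ _ _, ?_⟩
  rintro x₁ ⟨a₁, b₁, ha₁, hb₁, hab₁, hx₁⟩ x₂ ⟨a₂, b₂, ha₂, hb₂, hab₂, hx₂⟩
    ⟨c, d, hc, hd, hcd, hp⟩
  obtain ⟨i, hi⟩ := Function.ne_iff.1 hpq
  have hx₁i : a₁ * p i + b₁ * q i = x₁ i := congrFun hx₁ i
  have hx₂i : a₂ * p i + b₂ * q i = x₂ i := congrFun hx₂ i
  have hpi : c * x₁ i + d * x₂ i = p i := congrFun hp i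
  have key : (c * b₁ + d * b₂) * (q i - p i) = 0 := by
    linear_combination hpi + c * hx₁i + d * hx₂i - p i * hcd - c * p i * hab₁ - d * p i * hab₂
  have hsub : q i - p i ≠ 0 := sub_ne_zero.2 (Ne.symm hi)
  have hzero : c * b₁ + d * b₂ = 0 := by
    rcases mul_eq_zero.1 key with h | h
    · exact h
    · exact absurd h hsub
  have hcb : c * b₁ = 0 := by nlinarith [mul_nonneg hc hb₁, mul_nonneg hd hb₂]
  rcases mul_eq_zero.1 hcb with h | h
  · right
    have hd1 : d = 1 := by linarith
    rw [← hp, h, hd1]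
    simp
  · left
    have ha1 : a₁ = 1 := by linarith
    rw [← hx₁, h, ha1]
    simp

/-- For `S = {x ∈ ℤⁿ : Ax = b, l ≤ x ≤ u}` nonempty and finite, every edge of
`conv(S)` is parallel to an element of the Graver basis of `A`; consequently the
edge complexity of `S` is at most `max{‖g‖₁ : g ∈ 𝒢(A)}`. -/
theorem stmt_15 (m n : ℕ) (A : Matrix (Fin m) (Fin n) ℤ) (b : Fin m → ℤ)
    (l u : Fin n → ℤ)
    (S : Set (Fin n → ℤ))
    (hS : S = {x | A.mulVec x = b ∧ ∀ i, l i ≤ x i ∧ x i ≤ u i})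
    (hne : S.Nonempty) (hfin : S.Finite)
    (Sr : Set (Fin n → ℝ)) (hSr : Sr = (fun x : Fin n → ℤ => fun i => (x i : ℝ)) '' S) :
    (∀ p q : Fin n → ℝ, IsEdgeOf (convexHull ℝ Sr) p q →
      ∃ g ∈ GraverBasis A, ∃ c : ℝ, c ≠ 0 ∧ p - q = c • fun i => (g i : ℝ)) ∧
    ∀ N : ℕ, (∀ g ∈ GraverBasis A, ∑ i, (g i).natAbs ≤ N) →
      ∀ p q : Fin n → ℝ, IsEdgeOf (convexHull ℝ Sr) p q →
        ∃ w : Fin n → ℤ, (∑ i, (w i).natAbs) ≤ N ∧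
          ∃ c : ℝ, c ≠ 0 ∧ p - q = c • fun i => (w i : ℝ) := by
  classical
  have key : ∀ p q : Fin n → ℝ, IsEdgeOf (convexHull ℝ Sr) p q →
      ∃ g ∈ GraverBasis A, ∃ c : ℝ, c ≠ 0 ∧ p - q = c • fun i => (g i : ℝ) := by
    rintro p q ⟨hpq, hext⟩
    -- endpoints are extreme points, hence in Sr
    have hpSr : p ∈ Sr :=
      extremePoints_convexHull_subset
        (hext.trans (isExtreme_singleton.2 (endpoint_extreme_s15 hpq))).mem_extremePoints
    have hqext : q ∈ (segment ℝ p q).extremePoints ℝ := by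
      have := endpoint_extreme_s15 hpq.symm
      rwa [segment_symm] at this
    have hqSr : q ∈ Sr :=
      extremePoints_convexHull_subset
        (hext.trans (isExtreme_singleton.2 hqext)).mem_extremePoints
    rw [hSr] at hpSr hqSr
    obtain ⟨x, hxS, hxp⟩ := hpSr
    obtain ⟨z, hzS, hzq⟩ := hqSr
    have hxb : A.mulVec x = b := (hS ▸ hxS).1
    have hzb : A.mulVec z = b := (hS ▸ hzS).1
    have hxz : x ≠ z := by
      rintro rfl
      exact hpq (hxp ▸ hzq ▸ rfl)
    have hne0 : z - x ≠ 0 := sub_ne_zero.2 (Ne.symm hxz)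
    have hker : A.mulVec (z - x) = 0 := by
      rw [Matrix.mulVec_sub, hxb, hzb, sub_self]
    obtain ⟨g, hg, hgconf⟩ := exists_graver_conform A (z - x) hne0 hker
    have hg0 : g ≠ 0 := hg.1
    have hmem : ∀ y : Fin n → ℤ, A.mulVec y = 0 → Conforms y (z - x) → x + y ∈ S := by
      intro y hy hconf
      rw [hS]
      refine ⟨by rw [Matrix.mulVec_add, hy, hxb, add_zero], fun i => ?_⟩
      exact bound_comp (l i) (u i) (x i) (z i) (y i)
        ((hS ▸ hxS).2 i).1 ((hS ▸ hxS).2 i).2 ((hS ▸ hzS).2 i).1 ((hS ▸ hzS).2 i).2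
        (hconf i).1 (hconf i).2
    have haS : x + g ∈ S := hmem g hg.2.1 hgconf
    have hbS : x + ((z - x) - g) ∈ S := by
      refine hmem _ (by rw [Matrix.mulVec_sub, hker, hg.2.1, sub_self]) fun i => ?_
      exact conf_sub_comp (g i) ((z - x) i) (hgconf i).1 (hgconf i).2
    refine ⟨g, hg, ?_⟩
    by_cases hab : x + g = x + ((z - x) - g)
    · -- 2g = z - x
      have h2 : ∀ i, z i - x i = g i + g i := by
        intro i
        have := congrFun (add_left_cancel hab) i
        simp only [Pi.sub_apply] at this
        omega
      refine ⟨-2, by norm_num, ?_⟩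
      funext i
      have hpi : (x i : ℝ) = p i := congrFun hxp i
      have hqi : (z i : ℝ) = q i := congrFun hzq i
      have := h2 i
      simp only [Pi.sub_apply, Pi.smul_apply, smul_eq_mul]
      rw [← hpi, ← hqi]
      push_cast
      have : (z i : ℝ) - (x i : ℝ) = (g i : ℝ) + (g i : ℝ) := by exact_mod_cast this
      linarith
    · -- general case via extremeness
      set ra : Fin n → ℝ := fun i => ((x + g) i : ℝ) with hra_def
      set rb : Fin n → ℝ := fun i => ((x + ((z - x) - g)) i : ℝ) with hrb_def
      have hraC : ra ∈ convexHull ℝ Sr := subset_convexHull ℝ Sr (by rw [hSr]; exact ⟨_, haS, rfl⟩)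
      have hrbC : rb ∈ convexHull ℝ Sr := subset_convexHull ℝ Sr (by rw [hSr]; exact ⟨_, hbS, rfl⟩)
      have hrab : ra ≠ rb := by
        intro e
        apply hab
        rw [hra_def, hrb_def] at e
        funext i
        exact_mod_cast congrFun e i
      have hsum : ra + rb = p + q := by
        funext i
        have hpi : (x i : ℝ) = p i := congrFun hxp i
        have hqi : (z i : ℝ) = q i := congrFun hzq i
        simp only [hra_def, hrb_def, Pi.add_apply, Pi.sub_apply]
        push_cast
        linarith
      have hmidseg : (1/2 : ℝ) • p + (1/2 : ℝ) • q ∈ segment ℝ p q :=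
        ⟨1/2, 1/2, by norm_num, by norm_num, by norm_num, rfl⟩
      have hmidopen : (1/2 : ℝ) • p + (1/2 : ℝ) • q ∈ openSegment ℝ ra rb :=
        ⟨1/2, 1/2, by norm_num, by norm_num, by norm_num, by
          rw [← smul_add, ← smul_add, hsum]⟩
      have hra_seg := hext.2 hraC hrbC hmidseg hmidopen
      obtain ⟨s, t, hs, ht, hst, hseq⟩ := hra_seg
      have hkey : ∀ i, (g i : ℝ) = t * (q i - p i) := by
        intro i
        have h1 : s * p i + t * q i = ra i := congrFun hseq i
        have h2 : ra i = p i + (g i : ℝ) := by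
          have hpi : (x i : ℝ) = p i := congrFun hxp i
          simp only [hra_def, Pi.add_apply]
          push_cast
          rw [hpi]
        linear_combination -h1 - h2 + p i * hst
      have hgR : ∃ i, (g i : ℝ) ≠ 0 := by
        by_contra hc
        push_neg at hc
        exact hg0 (funext fun i => by exact_mod_cast hc i)
      have ht0 : t ≠ 0 := by
        rintro rfl
        obtain ⟨i, hi⟩ := hgR
        exact hi (by rw [hkey i]; ring)
      refine ⟨-t⁻¹, by simp [ht0], ?_⟩
      funext i
      simp only [Pi.sub_apply, Pi.smul_apply, smul_eq_mul]
      rw [hkey i]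
      field_simp
      ring
  refine ⟨key, fun N hN p q hedge => ?_⟩
  obtain ⟨g, hg, c, hc, hcg⟩ := key p q hedge
  exact ⟨g, hN g hg, c, hc, hcg⟩
end

section
/- Let k ≥ 2, r = k+1, d ≥ 1, n = k·2^d, W the d×n binary matrix with k copies of each column in {0,1}^d, and S = S^n_r the 0/1-vectors with exactly r ones. Then the image WS equals {0,…,r}^d \ V_0 where V_0 = {0,r}^d, and the set of vertices of conv(WS) consists exactly of those vectors having one entry equal to 1 or r−1 and all other entries in {0, r}; hence conv(WS) has exactly d·2^d vertices. -/
namespace Stmt19Aux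

/-- The lattice set `{0,…,r}^d` minus vectors with all entries in `{0,r}`. -/
def LS (d r : ℕ) : Set (Fin d → ℝ) :=
  {v | (∀ i, ∃ t : ℕ, t ≤ r ∧ v i = t) ∧ ¬ (∀ i, v i = 0 ∨ v i = (r : ℝ))}

/-- The claimed vertex set. -/
def VX (d r : ℕ) : Set (Fin d → ℝ) :=
  {v | ∃ i, (v i = 1 ∨ v i = (r : ℝ) - 1) ∧ ∀ j, j ≠ i → (v j = 0 ∨ v j = (r : ℝ))}

lemma zero_of_combo {a b u w : ℝ} (ha : 0 < a) (hb : 0 < b) (hu : 0 ≤ u) (hw : 0 ≤ w)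
    (h : a * u + b * w = 0) : u = 0 ∧ w = 0 := by
  have hau : a * u = 0 := le_antisymm (by nlinarith) (by positivity)
  have hbw : b * w = 0 := by linarith
  constructor
  · rcases mul_eq_zero.1 hau with h' | h'
    · exact absurd h' ha.ne'
    · exact h'
  · rcases mul_eq_zero.1 hbw with h' | h'
    · exact absurd h' hb.ne'
    · exact h'

lemma hull_bounds {d r : ℕ} {z : Fin d → ℝ} (hz : z ∈ convexHull ℝ (LS d r)) (j : Fin d) :
    0 ≤ z j ∧ z j ≤ (r : ℝ) := by
  have hlin : IsLinearMap ℝ (fun w : Fin d → ℝ => w j) := ⟨fun _ _ => rfl, fun _ _ => rfl⟩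
  constructor
  · have : convexHull ℝ (LS d r) ⊆ {w | (0:ℝ) ≤ w j} := by
      apply convexHull_min _ (convex_halfSpace_ge hlin 0)
      rintro p ⟨hp, -⟩
      obtain ⟨t, -, hpt⟩ := hp j
      simp only [Set.mem_setOf_eq, hpt]
      positivity
    exact this hz
  · have : convexHull ℝ (LS d r) ⊆ {w | w j ≤ (r:ℝ)} := by
      apply convexHull_min _ (convex_halfSpace_le hlin r)
      rintro p ⟨hp, -⟩
      obtain ⟨t, ht, hpt⟩ := hp j
      simp only [Set.mem_setOf_eq, hpt]
      exact_mod_cast ht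
    exact this hz

lemma midpoint_not_extreme {d r : ℕ} {v : Fin d → ℝ} (j0 : Fin d)
    (hx : Function.update v j0 (v j0 - 1) ∈ LS d r)
    (hy : Function.update v j0 (v j0 + 1) ∈ LS d r)
    (hv : v ∈ Set.extremePoints ℝ (convexHull ℝ (LS d r))) : False := by
  have hseg : v ∈ openSegment ℝ (Function.update v j0 (v j0 - 1))
      (Function.update v j0 (v j0 + 1)) := by
    refine ⟨1/2, 1/2, by norm_num, by norm_num, by norm_num, ?_⟩
    funext j
    by_cases hj : j = j0
    · subst hj
      simp [Function.update_self]
      ring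
    · simp [Function.update_of_ne hj]
      ring
  have h := hv.2 (subset_convexHull ℝ _ hx) (subset_convexHull ℝ _ hy) hseg
  have := congrFun h j0
  simp [Function.update_self] at this


lemma vx_subset_extreme {d r : ℕ} (hr3 : 3 ≤ r) :
    VX d r ⊆ Set.extremePoints ℝ (convexHull ℝ (LS d r)) := by
  classical
  intro v hv
  obtain ⟨i, hvi, hvj⟩ := hv
  have hr3R : (3 : ℝ) ≤ r := by exact_mod_cast hr3
  -- v belongs to the lattice set
  have hvP : v ∈ LS d r := by
    constructor
    · intro j
      by_cases hj : j = i
      · subst hj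
        rcases hvi with h | h
        · exact ⟨1, by omega, by rw [h]; norm_num⟩
        · refine ⟨r - 1, by omega, ?_⟩
          rw [h, Nat.cast_sub (by omega : 1 ≤ r)]
          norm_num
      · rcases hvj j hj with h | h
        · exact ⟨0, by omega, by rw [h]; norm_num⟩
        · exact ⟨r, le_rfl, h⟩
    · intro hall
      rcases hall i with h | h <;> rcases hvi with h' | h' <;> rw [h'] at h <;> linarith
  -- the pinning functional
  set cnd : Fin d → Prop := fun j => if j = i then v i = 1 else v j = 0 with hcnd
  set g : (Fin d → ℝ) → ℝ := fun z => ∑ j, if cnd j then z j else (r : ℝ) - z j with hg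
  have hterm_v : ∀ j, j ≠ i → (if cnd j then v j else (r : ℝ) - v j) = 0 := by
    intro j hj
    rcases hvj j hj with h | h
    · rw [if_pos (by simp [hcnd, hj, h])]
      exact h
    · rw [if_neg (by simp [hcnd, hj]; rw [h]; intro h0; rw [h0] at hr3R; linarith)]
      rw [h]; ring
  have hgv : g v = 1 := by
    show (∑ j, if cnd j then v j else (r:ℝ) - v j) = 1
    rw [Finset.sum_eq_single_of_mem i (Finset.mem_univ i) (fun j _ hj => hterm_v j hj)]
    rcases hvi with h | h
    · rw [if_pos (by simp [hcnd, h])]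
      exact h
    · rw [if_neg (by simp [hcnd]; rw [h]; intro h0; linarith)]
      rw [h]; ring
  have hcombo : ∀ a b : ℝ, a + b = 1 → ∀ x y : Fin d → ℝ,
      g (a • x + b • y) = a * g x + b * g y := by
    intro a b hab x y
    simp only [hg]
    rw [Finset.mul_sum, Finset.mul_sum, ← Finset.sum_add_distrib]
    refine Finset.sum_congr rfl fun j _ => ?_
    by_cases hc : cnd j
    · simp only [if_pos hc, Pi.add_apply, Pi.smul_apply, smul_eq_mul]
    · simp only [if_neg hc, Pi.add_apply, Pi.smul_apply, smul_eq_mul]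
      nlinarith [hab]
  have hg1 : ∀ p ∈ LS d r, 1 ≤ g p := by
    intro p hp
    obtain ⟨hpt, hpnc⟩ := hp
    push_neg at hpnc
    obtain ⟨j0, h0, hR⟩ := hpnc
    choose u hu hpu using hpt
    have hnonneg : ∀ j, 0 ≤ if cnd j then p j else (r : ℝ) - p j := by
      intro j
      by_cases hc : cnd j
      · rw [if_pos hc, hpu j]; positivity
      · rw [if_neg hc, hpu j]
        have : (u j : ℝ) ≤ r := by exact_mod_cast hu j
        linarith
    have hu0 : u j0 ≠ 0 := by
      intro h; rw [hpu j0, h] at h0; simp at h0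
    have hur : u j0 ≠ r := by
      intro h; rw [hpu j0, h] at hR; simp at hR
    have h1u : (1 : ℝ) ≤ u j0 := by exact_mod_cast Nat.one_le_iff_ne_zero.2 hu0
    have hu1 : (u j0 : ℝ) ≤ r - 1 := by
      have : u j0 ≤ r - 1 := by have := hu j0; omega
      have h2 : ((u j0 : ℕ) : ℝ) ≤ ((r - 1 : ℕ) : ℝ) := by exact_mod_cast this
      rw [Nat.cast_sub (by omega : 1 ≤ r)] at h2
      simpa using h2
    have hj0 : (1 : ℝ) ≤ if cnd j0 then p j0 else (r : ℝ) - p j0 := by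
      by_cases hc : cnd j0
      · rw [if_pos hc, hpu j0]; exact h1u
      · rw [if_neg hc, hpu j0]; linarith
    calc (1 : ℝ) ≤ _ := hj0
      _ ≤ g p := Finset.single_le_sum (fun j _ => hnonneg j) (Finset.mem_univ j0)
  have hhull1 : convexHull ℝ (LS d r) ⊆ {z | 1 ≤ g z} := by
    apply convexHull_min hg1
    intro x hx y hy a b ha hb hab
    have hx' : (1:ℝ) ≤ g x := hx
    have hy' : (1:ℝ) ≤ g y := hy
    show (1:ℝ) ≤ g (a • x + b • y)
    rw [hcombo a b hab]
    nlinarith [mul_le_mul_of_nonneg_left hx' ha, mul_le_mul_of_nonneg_left hy' hb]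
  -- extremality
  refine mem_extremePoints.2 ⟨subset_convexHull ℝ _ hvP, ?_⟩
  intro x hx y hy hseg
  obtain ⟨a, b, ha, hb, hab, hsum⟩ := hseg
  have hsum' : ∀ j, a * x j + b * y j = v j := by
    intro j
    have := congrFun hsum j
    simpa using this
  have hpin : ∀ j, j ≠ i → x j = v j ∧ y j = v j := by
    intro j hj
    have hxb := hull_bounds hx j
    have hyb := hull_bounds hy j
    rcases hvj j hj with h0 | hR
    · have h : a * x j + b * y j = 0 := by rw [hsum' j, h0]
      obtain ⟨h1, h2⟩ := zero_of_combo ha hb hxb.1 hyb.1 h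
      exact ⟨by rw [h1, h0], by rw [h2, h0]⟩
    · have h : a * ((r : ℝ) - x j) + b * ((r : ℝ) - y j) = 0 := by
        have := hsum' j
        nlinarith
      obtain ⟨h1, h2⟩ := zero_of_combo ha hb (by linarith [hxb.2]) (by linarith [hyb.2]) h
      constructor
      · rw [hR]; linarith
      · rw [hR]; linarith
  have hgxy : g x = 1 ∧ g y = 1 := by
    have h1 : a * g x + b * g y = 1 := by
      rw [← hcombo a b hab x y, hsum, hgv]
    have h2 : 1 ≤ g x := hhull1 hx
    have h3 : 1 ≤ g y := hhull1 hy
    have h4 : a * (g x - 1) + b * (g y - 1) = 0 := by nlinarith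
    obtain ⟨h5, h6⟩ := zero_of_combo ha hb (by linarith) (by linarith) h4
    constructor <;> linarith
  have hcoord : ∀ z : Fin d → ℝ, (∀ j, j ≠ i → z j = v j) → g z = 1 → z i = v i := by
    intro z hzp hz1
    have hsum1 : g z = if cnd i then z i else (r : ℝ) - z i := by
      show (∑ j, if cnd j then z j else (r:ℝ) - z j) = _
      apply Finset.sum_eq_single_of_mem i (Finset.mem_univ i)
      intro j _ hj
      rw [hzp j hj]
      exact hterm_v j hj
    rw [hsum1] at hz1
    rcases hvi with h | h
    · rw [if_pos (by simp [hcnd, h])] at hz1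
      rw [hz1, h]
    · rw [if_neg (by simp [hcnd]; rw [h]; intro h0; linarith)] at hz1
      rw [h]; linarith
  have hx_eq : x = v := by
    funext j
    by_cases hj : j = i
    · subst hj; exact hcoord x (fun j hj => (hpin j hj).1) hgxy.1
    · exact (hpin j hj).1
  have hy_eq : y = v := by
    funext j
    by_cases hj : j = i
    · subst hj; exact hcoord y (fun j hj => (hpin j hj).2) hgxy.2
    · exact (hpin j hj).2
  exact ⟨hx_eq, hy_eq⟩

lemma extreme_subset_vx {d r : ℕ} (hr3 : 3 ≤ r) :
    Set.extremePoints ℝ (convexHull ℝ (LS d r)) ⊆ VX d r := by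
  classical
  intro v hv
  have hvP : v ∈ LS d r := extremePoints_convexHull_subset hv
  by_contra hnot
  have hnot' : ∀ i, (v i = 1 ∨ v i = (r : ℝ) - 1) →
      ∃ j, j ≠ i ∧ v j ≠ 0 ∧ v j ≠ (r : ℝ) := by
    intro i hi
    by_contra hcon
    push_neg at hcon
    exact hnot ⟨i, hi, fun j hj => by
      by_cases h0 : v j = 0
      · exact Or.inl h0
      · exact Or.inr (hcon j hj h0)⟩
  obtain ⟨hvt, hvnc⟩ := hvP
  choose t ht hvt2 using hvt
  push_neg at hvnc
  obtain ⟨j0, h0, hR⟩ := hvnc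
  have ht0 : t j0 ≠ 0 := by intro h; rw [hvt2 j0, h] at h0; simp at h0
  have htr : t j0 ≠ r := by intro h; rw [hvt2 j0, h] at hR; simp at hR
  have h1r : (1:ℝ) ≤ r := by
    have : (3:ℝ) ≤ r := by exact_mod_cast hr3
    linarith
  -- helper to build membership of updated vectors
  have hupd : ∀ (w : ℝ) (m : ℕ), m ≤ r → w = (m : ℝ) →
      (¬ ∀ j', (Function.update v j0 w) j' = 0 ∨ (Function.update v j0 w) j' = (r:ℝ)) →
      Function.update v j0 w ∈ LS d r := by
    intro w m hm hw hnc
    refine ⟨fun j => ?_, hnc⟩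
    by_cases hj : j = j0
    · subst hj; rw [Function.update_self]; exact ⟨m, hm, hw⟩
    · rw [Function.update_of_ne hj]; exact ⟨t j, ht j, hvt2 j⟩
  have hcast : ∀ m : ℕ, 1 ≤ m → ((m - 1 : ℕ) : ℝ) = (m : ℝ) - 1 := by
    intro m hm; rw [Nat.cast_sub hm]; norm_num
  by_cases hB : ∃ j1, j1 ≠ j0 ∧ v j1 ≠ 0 ∧ v j1 ≠ (r : ℝ)
  · -- another non-corner coordinate exists
    obtain ⟨j1, hj1, hj10, hj1r⟩ := hB
    have hlo : 1 ≤ t j0 := Nat.one_le_iff_ne_zero.2 ht0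
    have hhi : t j0 ≤ r - 1 := by have := ht j0; omega
    have hnc : ∀ w : ℝ, ¬ ∀ j', (Function.update v j0 w) j' = 0 ∨
        (Function.update v j0 w) j' = (r:ℝ) := by
      intro w hall
      rcases hall j1 with h | h <;>
        rw [Function.update_of_ne hj1] at h
      · exact hj10 h
      · exact hj1r h
    refine midpoint_not_extreme j0 ?_ ?_ hv
    · refine hupd _ (t j0 - 1) (by omega) ?_ (hnc _)
      rw [hcast _ hlo, hvt2 j0]
    · refine hupd _ (t j0 + 1) (by omega) ?_ (hnc _)
      push_cast
      rw [hvt2 j0]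
  · -- all other coordinates are corners; v j0 must be strictly interior
    push_neg at hB
    have hA : ¬ (v j0 = 1 ∨ v j0 = (r : ℝ) - 1) := by
      intro hA
      obtain ⟨j, hj, hj0', hjr⟩ := hnot' j0 hA
      exact hjr (hB j hj hj0')
    push_neg at hA
    obtain ⟨hA1, hA2⟩ := hA
    have ht1 : t j0 ≠ 1 := by intro h; rw [hvt2 j0, h] at hA1; simp at hA1
    have htr1 : t j0 ≠ r - 1 := by
      intro h
      rw [hvt2 j0, h, Nat.cast_sub (by omega : 1 ≤ r)] at hA2
      simp at hA2
    have hlo : 2 ≤ t j0 := by omega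
    have hhi : t j0 ≤ r - 2 := by have := ht j0; omega
    have hcb : (2:ℝ) ≤ (t j0 : ℝ) ∧ (t j0 : ℝ) ≤ (r:ℝ) - 2 := by
      constructor
      · exact_mod_cast hlo
      · have h2 : ((t j0 : ℕ) : ℝ) ≤ ((r - 2 : ℕ) : ℝ) := by exact_mod_cast hhi
        rw [Nat.cast_sub (by omega : 2 ≤ r)] at h2
        simpa using h2
    refine midpoint_not_extreme j0 ?_ ?_ hv
    · refine hupd _ (t j0 - 1) (by omega) (by rw [hcast _ (by omega), hvt2 j0]) ?_
      intro hall
      rcases hall j0 with h | h <;> rw [Function.update_self, hvt2 j0] at h <;>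
        [linarith [hcb.1]; linarith [hcb.2]]
    · refine hupd _ (t j0 + 1) (by omega) (by push_cast; rw [hvt2 j0]) ?_
      intro hall
      rcases hall j0 with h | h <;> rw [Function.update_self, hvt2 j0] at h <;>
        [linarith [hcb.1]; linarith [hcb.2]]

lemma extreme_eq {d r : ℕ} (hr3 : 3 ≤ r) :
    Set.extremePoints ℝ (convexHull ℝ (LS d r)) = VX d r :=
  Set.Subset.antisymm (extreme_subset_vx hr3) (vx_subset_extreme hr3)

lemma vx_ncard {d r : ℕ} (hr3 : 3 ≤ r) : (VX d r).ncard = d * 2 ^ d := by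
  classical
  have hr3R : (3 : ℝ) ≤ r := by exact_mod_cast hr3
  set φ : Fin d × (Fin d → Bool) → (Fin d → ℝ) := fun p j =>
    if j = p.1 then (if p.2 p.1 then 1 else (r : ℝ) - 1)
    else (if p.2 j then (r : ℝ) else 0) with hφ
  have hφ1 : ∀ i (f : Fin d → Bool), φ (i, f) i = if f i then 1 else (r : ℝ) - 1 := by
    intro i f; simp [hφ]
  have hφ2 : ∀ i (f : Fin d → Bool) j, j ≠ i → φ (i, f) j = if f j then (r : ℝ) else 0 := by
    intro i f j hj; simp [hφ, hj]
  have hrange : VX d r = Set.range φ := by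
    ext v
    constructor
    · rintro ⟨i, hvi, hvj⟩
      refine ⟨(i, fun j => if j = i then decide (v i = 1) else decide (v j = (r : ℝ))), ?_⟩
      funext j
      by_cases hj : j = i
      · subst hj
        rw [hφ1]
        by_cases h1 : v j = 1
        · simp [h1]
        · have h2 : v j = (r : ℝ) - 1 := hvi.resolve_left h1
          simp only [h1, h2]
          simp
          exact fun hx => hx.symm
      · rw [hφ2 i _ j hj]
        rcases hvj j hj with h | h
        · have hne : v j ≠ (r : ℝ) := by rw [h]; intro hc; rw [← hc] at hr3R; linarith
          simp [hj, hne, h]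
          intro h0
          exact_mod_cast h0.symm
        · simp [hj, h]
    · rintro ⟨⟨i, f⟩, rfl⟩
      refine ⟨i, ?_, ?_⟩
      · rw [hφ1]
        by_cases hf : f i
        · left; simp [hf]
        · right; simp [hf]
      · intro j hj
        rw [hφ2 i f j hj]
        by_cases hf : f j
        · right; simp [hf]
        · left; simp [hf]
  have hinj : Function.Injective φ := by
    rintro ⟨i, f⟩ ⟨i', f'⟩ h
    have hii : i = i' := by
      by_contra hii
      have h1 : (if f i then (1:ℝ) else (r:ℝ) - 1) = if f' i then (r : ℝ) else 0 := by
        have := congrFun h i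
        rwa [hφ1, hφ2 i' f' i hii] at this
      split_ifs at h1 <;> linarith
    subst hii
    have hff : f = f' := by
      funext j
      by_cases hj : j = i
      · subst hj
        have h1 : (if f j then (1:ℝ) else (r:ℝ) - 1) = if f' j then (1:ℝ) else (r:ℝ) - 1 := by
          have := congrFun h j
          rwa [hφ1, hφ1] at this
        cases hf : f j <;> cases hf' : f' j <;> simp [hf, hf'] at h1 <;>
          first | rfl | (exfalso; linarith)
      · have h1 : (if f j then (r:ℝ) else 0) = if f' j then (r:ℝ) else 0 := by
          have := congrFun h j
          rwa [hφ2 i f j hj, hφ2 i f' j hj] at this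
        cases hf : f j <;> cases hf' : f' j <;> simp [hf, hf'] at h1 <;>
          first | rfl | (exfalso; linarith)
    rw [hff]
  rw [hrange, ← Set.image_univ, Set.ncard_image_of_injective _ hinj, Set.ncard_univ]
  simp [Nat.card_eq_fintype_card, Fintype.card_fun]

set_option maxHeartbeats 1000000 in
lemma image_eq {d k r : ℕ} (hk : 2 ≤ k) (hr : r = k + 1)
    (W : Matrix (Fin d) (Fin k × (Fin d → Bool)) ℝ)
    (hW : ∀ i c, W i c = if c.2 i then 1 else 0)
    (S : Set ((Fin k × (Fin d → Bool)) → ℝ))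
    (hS : S = {x | (∀ j, x j = 0 ∨ x j = 1) ∧ {j | x j = 1}.ncard = r}) :
    W.mulVec '' S = LS d r := by
  classical
  apply Set.Subset.antisymm
  · rintro v ⟨x, hxS, rfl⟩
    rw [hS] at hxS
    obtain ⟨hx01, hxc⟩ := hxS
    set F : Finset (Fin k × (Fin d → Bool)) := Finset.univ.filter (fun j => x j = 1) with hF
    have hFc : F.card = r := by
      have hset : {j | x j = 1} = ↑F := by ext j; simp [hF]
      rw [hset, Set.ncard_coe_finset] at hxc
      exact hxc
    have hmv : ∀ i, W.mulVec x i = ((F.filter fun j => j.2 i = true).card : ℝ) := by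
      intro i
      have h1 : W.mulVec x i = ∑ j, (if j.2 i then (1:ℝ) else 0) * x j := by
        simp [Matrix.mulVec, dotProduct, hW]
      rw [h1]
      have hterm : ∀ j, (if j.2 i then (1:ℝ) else 0) * x j
          = if (j ∈ F ∧ j.2 i = true) then 1 else 0 := by
        intro j
        rcases hx01 j with h0 | h1'
        · have hjF : j ∉ F := by simp [hF, h0]
          simp [h0, hjF]
        · have hjF : j ∈ F := by simp [hF, h1']
          by_cases hb : j.2 i <;> simp [h1', hjF, hb]
      rw [Finset.sum_congr rfl (fun j _ => hterm j), Finset.sum_boole]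
      congr 1
      congr 1
      ext j
      simp [Finset.mem_filter]
    constructor
    · intro i
      exact ⟨(F.filter fun j => j.2 i = true).card,
        le_trans (Finset.card_filter_le F _) (le_of_eq hFc), hmv i⟩
    · intro hall
      have hex : ∃ j0, j0 ∈ F := by
        have : 0 < F.card := by omega
        obtain ⟨j0, hj0⟩ := Finset.card_pos.1 this
        exact ⟨j0, hj0⟩
      obtain ⟨j0, hj0⟩ := hex
      have hsame : ∀ j ∈ F, j.2 = j0.2 := by
        intro j hj
        funext i
        rcases hall i with h0 | hRr
        · have hz : ((F.filter fun j => j.2 i = true).card : ℝ) = 0 := by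
            rw [← hmv i]; exact h0
          have hz' : (F.filter fun j => j.2 i = true) = ∅ :=
            Finset.card_eq_zero.1 (by exact_mod_cast hz)
          have hjn : j ∉ F.filter fun j => j.2 i = true := by rw [hz']; simp
          have hj0n : j0 ∉ F.filter fun j => j.2 i = true := by rw [hz']; simp
          simp only [Finset.mem_filter] at hjn hj0n
          have e1 : j.2 i = false := by
            cases hb : j.2 i
            · rfl
            · exact absurd ⟨hj, hb⟩ hjn
          have e2 : j0.2 i = false := by
            cases hb : j0.2 i
            · rfl
            · exact absurd ⟨hj0, hb⟩ hj0n
          rw [e1, e2]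
        · have hz : ((F.filter fun j => j.2 i = true).card : ℝ) = r := by
            rw [← hmv i]; exact hRr
          have hz' : (F.filter fun j => j.2 i = true).card = r := by exact_mod_cast hz
          have hfull : (F.filter fun j => j.2 i = true) = F :=
            Finset.eq_of_subset_of_card_le (Finset.filter_subset _ _) (by omega)
          have hjm : j ∈ F.filter fun j => j.2 i = true := by rw [hfull]; exact hj
          have hj0m : j0 ∈ F.filter fun j => j.2 i = true := by rw [hfull]; exact hj0
          simp only [Finset.mem_filter] at hjm hj0m
          rw [hjm.2, hj0m.2]
      have hsub : F ⊆ Finset.univ.image (fun a : Fin k => (a, j0.2)) := by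
        intro j hj
        rw [Finset.mem_image]
        refine ⟨j.1, Finset.mem_univ _, ?_⟩
        rw [← hsame j hj]
      have hle : F.card ≤ k :=
        le_trans (Finset.card_le_card hsub)
          (le_trans Finset.card_image_le (by simp))
      omega
  · rintro v ⟨hvt, hvnc⟩
    choose t ht hvt2 using hvt
    push_neg at hvnc
    obtain ⟨i0, h0, hR⟩ := hvnc
    have ht0 : t i0 ≠ 0 := by intro h; rw [hvt2 i0, h] at h0; simp at h0
    have htr : t i0 ≠ r := by intro h; rw [hvt2 i0, h] at hR; simp at hR
    set m := t i0 with hm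
    have hm1 : 1 ≤ m := Nat.one_le_iff_ne_zero.2 ht0
    have hmk : m ≤ k := by have := ht i0; omega
    set φ : Fin r → Fin k × (Fin d → Bool) := fun s =>
      (⟨if (s : ℕ) < m then (s : ℕ) else (s : ℕ) - m, by
        have hs := s.2; split_ifs with h <;> omega⟩,
       fun i => decide ((s : ℕ) < t i)) with hφ
    have hinj : Function.Injective φ := by
      intro s s' hss
      have h2 : ((s : ℕ) < m ↔ (s' : ℕ) < m) := by
        have := congrFun (congrArg Prod.snd hss) i0
        simpa [hφ, hm] using this
      have h1 : (if (s : ℕ) < m then (s : ℕ) else (s : ℕ) - m)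
          = (if (s' : ℕ) < m then (s' : ℕ) else (s' : ℕ) - m) := by
        have := congrArg (fun p => (p.1 : Fin k).1) hss
        simpa [hφ] using this
      apply Fin.ext
      by_cases hs : (s : ℕ) < m
      · have hs' : (s' : ℕ) < m := h2.1 hs
        rw [if_pos hs, if_pos hs'] at h1
        exact h1
      · have hs' : ¬ (s' : ℕ) < m := fun hh => hs (h2.2 hh)
        rw [if_neg hs, if_neg hs'] at h1
        omega
    refine ⟨fun j => if j ∈ Set.range φ then (1:ℝ) else 0, ?_, ?_⟩
    · rw [hS]
      constructor
      · intro j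
        by_cases h : j ∈ Set.range φ <;> simp [h]
      · have hset : {j | (if j ∈ Set.range φ then (1:ℝ) else 0) = 1} = Set.range φ := by
          ext j
          by_cases h : j ∈ Set.range φ
          · simp only [Set.mem_setOf_eq, if_pos h]
            exact iff_of_true (by norm_num) h
          · simp only [Set.mem_setOf_eq, if_neg h]
            exact iff_of_false (by norm_num) h
        rw [hset, ← Set.image_univ, Set.ncard_image_of_injective _ hinj, Set.ncard_univ]
        simp [Nat.card_eq_fintype_card]
    · funext i
      have h1 : W.mulVec (fun j => if j ∈ Set.range φ then (1:ℝ) else 0) i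
          = ∑ j, (if j.2 i then (1:ℝ) else 0) * (if j ∈ Set.range φ then (1:ℝ) else 0) := by
        simp [Matrix.mulVec, dotProduct, hW]
      rw [h1]
      have h2 : ∑ j, (if j.2 i then (1:ℝ) else 0) * (if j ∈ Set.range φ then (1:ℝ) else 0)
          = ∑ j ∈ Finset.univ.image φ,
              (if j.2 i then (1:ℝ) else 0) * (if j ∈ Set.range φ then (1:ℝ) else 0) := by
        symm
        apply Finset.sum_subset (Finset.subset_univ _)
        intro j _ hj
        have : j ∉ Set.range φ := by
          intro ⟨s, hs⟩
          exact hj (Finset.mem_image.2 ⟨s, Finset.mem_univ s, hs⟩)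
        simp [this]
      rw [h2, Finset.sum_image (fun a _ b _ hab => hinj hab)]
      have h3 : ∀ s : Fin r,
          (if (φ s).2 i then (1:ℝ) else 0) * (if φ s ∈ Set.range φ then (1:ℝ) else 0)
          = if (s : ℕ) < t i then 1 else 0 := by
        intro s
        have hmem : φ s ∈ Set.range φ := ⟨s, rfl⟩
        rw [if_pos hmem, mul_one]
        simp [hφ]
      rw [Finset.sum_congr rfl (fun s _ => h3 s)]
      rw [Fin.sum_univ_eq_sum_range (fun n => if n < t i then (1:ℝ) else 0) r]
      have h4 : ∑ n ∈ Finset.range r, (if n < t i then (1:ℝ) else 0)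
          = ∑ n ∈ Finset.range (t i), (if n < t i then (1:ℝ) else 0) := by
        symm
        apply Finset.sum_subset (Finset.range_subset_range.2 (ht i))
        intro n _ hn
        rw [Finset.mem_range] at hn
        rw [if_neg (by omega)]
      rw [h4]
      have h5 : ∑ n ∈ Finset.range (t i), (if n < t i then (1:ℝ) else 0)
          = ∑ n ∈ Finset.range (t i), (1:ℝ) := by
        apply Finset.sum_congr rfl
        intro n hn
        rw [if_pos (Finset.mem_range.1 hn)]
      rw [h5]
      simp [hvt2 i]

end Stmt19Aux

/-- For `k ≥ 2`, `r = k+1`, `W` the `d × k·2^d` binary matrix with `k` copies of each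
column in `{0,1}^d` and `S` the 0/1-vectors with exactly `r` ones: the image `WS` is
`{0,…,r}^d` minus the vectors with all entries in `{0, r}`; the vertices of
`conv(WS)` are exactly the vectors with one entry equal to `1` or `r−1` and all other
entries in `{0, r}`; hence there are exactly `d·2^d` vertices. -/
theorem stmt_19 (d k r : ℕ) (hd : 1 ≤ d) (hk : 2 ≤ k) (hr : r = k + 1)
    (W : Matrix (Fin d) (Fin k × (Fin d → Bool)) ℝ)
    (hW : ∀ i c, W i c = if c.2 i then 1 else 0)
    (S : Set ((Fin k × (Fin d → Bool)) → ℝ))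
    (hS : S = {x | (∀ j, x j = 0 ∨ x j = 1) ∧ {j | x j = 1}.ncard = r}) :
    W.mulVec '' S = {v : Fin d → ℝ |
        (∀ i, ∃ t : ℕ, t ≤ r ∧ v i = t) ∧ ¬ (∀ i, v i = 0 ∨ v i = r)} ∧
    Set.extremePoints ℝ (convexHull ℝ (W.mulVec '' S)) =
      {v : Fin d → ℝ | ∃ i, (v i = 1 ∨ v i = (r : ℝ) - 1) ∧
        ∀ j, j ≠ i → (v j = 0 ∨ v j = r)} ∧
    (Set.extremePoints ℝ (convexHull ℝ (W.mulVec '' S))).ncard = d * 2 ^ d := by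
  have hr3 : 3 ≤ r := by omega
  have h1 : W.mulVec '' S = Stmt19Aux.LS d r := Stmt19Aux.image_eq hk hr W hW S hS
  refine ⟨h1, ?_, ?_⟩
  · rw [h1]
    exact Stmt19Aux.extreme_eq hr3
  · rw [h1, Stmt19Aux.extreme_eq hr3]
    exact Stmt19Aux.vx_ncard hr3
end
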